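/- arXiv:1210.5575 — 3 statements merged into one kernel-verified Lean document; each statement's English description precedes it below -/
import Mathlib

section
/- For every integer p ≥ 1, the collection of all interior functions for the H(div)-conforming hexahedral element of order p — namely ψ^{H1^1}_{i,j,k}, ψ^{H1^2}_{i,j,k} for 0 ≤ i,j,k ≤ p−1, ψ^{H1^3}_{j,k}, ψ^{H1^4}_{i,k}, ψ^{H1^5}_{i,j} for indices between 0 and p−1, ψ^{H2^1}_{i,j,k} for 0 ≤ i,j,k ≤ p−1, ψ^{H2^2}_{j,k}, ψ^{H2^3}_{i,k}, ψ^{H2^4}_{i,j} for indices between 0 and p−1, and ψ^{H3^1}_i, ψ^{H3^2}_j, ψ^{H3^3}_k for indices between 0 and p−1 — is linearly independent over ℝ as functions from [0,1]³ to ℝ³. -/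
open MeasureTheory
open scoped BigOperators

noncomputable section

/-- The reference cube `H = [0,1]³` (`p 0 = ξ`, `p 1 = η`, `p 2 = ζ`). -/
def HCube : Set (Fin 3 → ℝ) :=
  {p | (0 ≤ p 0 ∧ p 0 ≤ 1) ∧ (0 ≤ p 1 ∧ p 1 ≤ 1) ∧ (0 ≤ p 2 ∧ p 2 ≤ 1)}

/-- The classical Jacobi polynomial `P_n^{(a,b)}` in homogenized form:
`jacobiHom n a b u w = w^n P_n^{(a,b)}(u/w)` (for `w ≠ 0`). -/
def jacobiHom (n a b : ℕ) (u w : ℝ) : ℝ :=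
  ∑ k ∈ Finset.range (n+1),
    (((n+a).choose (n-k) : ℝ)) * (((n+b).choose k : ℝ)) *
      ((u - w)/2)^k * ((u + w)/2)^(n-k)

/-- The degree-`n` Legendre polynomial `ℓ_n` (normalized so `ℓ_n(1) = 1`). -/
def legendre (n : ℕ) (x : ℝ) : ℝ := jacobiHom n 0 0 x 1

/-- The integrated Legendre polynomial `L_n(x) = ∫_{−1}^x ℓ_{n−1}(t) dt`. -/
def intLeg (n : ℕ) (x : ℝ) : ℝ := ∫ t in (-1:ℝ)..x, legendre (n-1) t

/-- Type 1 interior function `ψ^{H1^1}_{i,j,k}`. -/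
def psiH11 (i j k : ℕ) (p : Fin 3 → ℝ) : Fin 3 → ℝ :=
  ![4 * intLeg (i+2) (2*p 0-1) * legendre (j+1) (2*p 1-1) * legendre (k+1) (2*p 2-1),
    0,
    -(4 * legendre (i+1) (2*p 0-1) * legendre (j+1) (2*p 1-1) * intLeg (k+2) (2*p 2-1))]

/-- Type 1 interior function `ψ^{H1^2}_{i,j,k}`. -/
def psiH12 (i j k : ℕ) (p : Fin 3 → ℝ) : Fin 3 → ℝ :=
  ![0,
    4 * legendre (i+1) (2*p 0-1) * intLeg (j+2) (2*p 1-1) * legendre (k+1) (2*p 2-1),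
    -(4 * legendre (i+1) (2*p 0-1) * legendre (j+1) (2*p 1-1) * intLeg (k+2) (2*p 2-1))]

/-- Type 1 interior function `ψ^{H1^3}_{j,k}`. -/
def psiH13 (j k : ℕ) (p : Fin 3 → ℝ) : Fin 3 → ℝ :=
  ![0,
    -(2 * intLeg (j+2) (2*p 1-1) * legendre (k+1) (2*p 2-1)),
    2 * legendre (j+1) (2*p 1-1) * intLeg (k+2) (2*p 2-1)]

/-- Type 1 interior function `ψ^{H1^4}_{i,k}`. -/
def psiH14 (i k : ℕ) (p : Fin 3 → ℝ) : Fin 3 → ℝ :=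
  ![2 * intLeg (i+2) (2*p 0-1) * legendre (k+1) (2*p 2-1),
    0,
    -(2 * legendre (i+1) (2*p 0-1) * intLeg (k+2) (2*p 2-1))]

/-- Type 1 interior function `ψ^{H1^5}_{i,j}`. -/
def psiH15 (i j : ℕ) (p : Fin 3 → ℝ) : Fin 3 → ℝ :=
  ![2 * intLeg (i+2) (2*p 0-1) * legendre (j+1) (2*p 1-1),
    -(2 * legendre (i+1) (2*p 0-1) * intLeg (j+2) (2*p 1-1)),
    0]

/-- Type 2 interior function `ψ^{H2^1}_{i,j,k}`. -/
def psiH21 (i j k : ℕ) (p : Fin 3 → ℝ) : Fin 3 → ℝ :=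
  ![intLeg (i+2) (2*p 0-1) * legendre (j+1) (2*p 1-1) * legendre (k+1) (2*p 2-1),
    legendre (i+1) (2*p 0-1) * intLeg (j+2) (2*p 1-1) * legendre (k+1) (2*p 2-1),
    0]

/-- Type 2 interior function `ψ^{H2^2}_{j,k}`. -/
def psiH22 (j k : ℕ) (p : Fin 3 → ℝ) : Fin 3 → ℝ :=
  ![0,
    intLeg (j+2) (2*p 1-1) * legendre (k+1) (2*p 2-1),
    legendre (j+1) (2*p 1-1) * intLeg (k+2) (2*p 2-1)]

/-- Type 2 interior function `ψ^{H2^3}_{i,k}`. -/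
def psiH23 (i k : ℕ) (p : Fin 3 → ℝ) : Fin 3 → ℝ :=
  ![intLeg (i+2) (2*p 0-1) * legendre (k+1) (2*p 2-1),
    0,
    legendre (i+1) (2*p 0-1) * intLeg (k+2) (2*p 2-1)]

/-- Type 2 interior function `ψ^{H2^4}_{i,j}`. -/
def psiH24 (i j : ℕ) (p : Fin 3 → ℝ) : Fin 3 → ℝ :=
  ![intLeg (i+2) (2*p 0-1) * legendre (j+1) (2*p 1-1),
    legendre (i+1) (2*p 0-1) * intLeg (j+2) (2*p 1-1),
    0]

/-- Type 3 interior function `ψ^{H3^1}_i`. -/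
def psiH31 (i : ℕ) (p : Fin 3 → ℝ) : Fin 3 → ℝ := ![intLeg (i+2) (2*p 0-1), 0, 0]

/-- Type 3 interior function `ψ^{H3^2}_j`. -/
def psiH32 (j : ℕ) (p : Fin 3 → ℝ) : Fin 3 → ℝ := ![0, intLeg (j+2) (2*p 1-1), 0]

/-- Type 3 interior function `ψ^{H3^3}_k`. -/
def psiH33 (k : ℕ) (p : Fin 3 → ℝ) : Fin 3 → ℝ := ![0, 0, intLeg (k+2) (2*p 2-1)]

/-- Index type for the interior functions of the order-`p`
`H(div)`-conforming hexahedral element. -/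
inductive HexIdx (p : ℕ) where
  | h11 (i j k : Fin p)
  | h12 (i j k : Fin p)
  | h13 (j k : Fin p)
  | h14 (i k : Fin p)
  | h15 (i j : Fin p)
  | h21 (i j k : Fin p)
  | h22 (j k : Fin p)
  | h23 (i k : Fin p)
  | h24 (i j : Fin p)
  | h31 (i : Fin p)
  | h32 (j : Fin p)
  | h33 (k : Fin p)

/-- The family of all interior functions of order `p`, as functions from
`[0,1]³` to `ℝ³`. -/
def hexFam (p : ℕ) : HexIdx p → (HCube → Fin 3 → ℝ)
  | .h11 i j k => fun q => psiH11 i j k q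
  | .h12 i j k => fun q => psiH12 i j k q
  | .h13 j k => fun q => psiH13 j k q
  | .h14 i k => fun q => psiH14 i k q
  | .h15 i j => fun q => psiH15 i j q
  | .h21 i j k => fun q => psiH21 i j k q
  | .h22 j k => fun q => psiH22 j k q
  | .h23 i k => fun q => psiH23 i k q
  | .h24 i j => fun q => psiH24 i j q
  | .h31 i => fun q => psiH31 i q
  | .h32 j => fun q => psiH32 j q
  | .h33 k => fun q => psiH33 k q


-- AUXILIARY SECTION (to be inserted before stmt3)
open Polynomial in
def legP (n : ℕ) : Polynomial ℝ :=
  ∑ k ∈ Finset.range (n+1), Polynomial.C (((n.choose (n-k)) : ℝ) * (n.choose k)) *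
    ((Polynomial.C (1/2 : ℝ) * (Polynomial.X - 1))^k *
     (Polynomial.C (1/2:ℝ) * (Polynomial.X + 1))^(n-k))

section PolyFacts
open Polynomial

lemma legP_eval (n : ℕ) (t : ℝ) : (legP n).eval t = legendre n t := by
  simp only [legP, legendre, jacobiHom, eval_finset_sum, eval_mul, eval_pow, eval_C, eval_sub,
    eval_add, eval_X, eval_one, Nat.add_zero]
  refine Finset.sum_congr rfl fun k _ => by ring

lemma legendre_zero (t : ℝ) : legendre 0 t = 1 := by
  simp [legendre, jacobiHom]

lemma legP_zero_eval (t : ℝ) : (legP 0).eval t = 1 := by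
  rw [legP_eval]; exact legendre_zero t

private lemma AB_facts (n k : ℕ) (hk : k ≤ n) :
    ((Polynomial.C (1/2 : ℝ) * (Polynomial.X - 1))^k *
     (Polynomial.C (1/2:ℝ) * (Polynomial.X + 1))^(n-k)).natDegree = n ∧
    ((Polynomial.C (1/2 : ℝ) * (Polynomial.X - 1))^k *
     (Polynomial.C (1/2:ℝ) * (Polynomial.X + 1))^(n-k)).leadingCoeff = (1/2:ℝ)^n := by
  have h1 : (Polynomial.C (1/2 : ℝ) * (Polynomial.X - 1)).natDegree = 1 := by
    rw [natDegree_C_mul (by norm_num : (1/2:ℝ) ≠ 0)]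
    simpa using natDegree_X_sub_C (1:ℝ)
  have h2 : (Polynomial.C (1/2 : ℝ) * (Polynomial.X + 1)).natDegree = 1 := by
    rw [natDegree_C_mul (by norm_num : (1/2:ℝ) ≠ 0)]
    simpa using natDegree_X_add_C (1:ℝ)
  have l1 : (Polynomial.C (1/2 : ℝ) * (Polynomial.X - 1)).leadingCoeff = 1/2 := by
    rw [leadingCoeff_mul]
    simp only [leadingCoeff_C]
    have : (Polynomial.X - 1 : ℝ[X]).leadingCoeff = 1 := by
      simpa using (monic_X_sub_C (1:ℝ)).leadingCoeff
    rw [this, mul_one]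
  have l2 : (Polynomial.C (1/2 : ℝ) * (Polynomial.X + 1)).leadingCoeff = 1/2 := by
    rw [leadingCoeff_mul]
    simp only [leadingCoeff_C]
    have : (Polynomial.X + 1 : ℝ[X]).leadingCoeff = 1 := by
      simpa using (monic_X_add_C (1:ℝ)).leadingCoeff
    rw [this, mul_one]
  have hA0 : (Polynomial.C (1/2 : ℝ) * (Polynomial.X - 1)) ≠ 0 :=
    leadingCoeff_ne_zero.mp (by rw [l1]; norm_num)
  have hB0 : (Polynomial.C (1/2 : ℝ) * (Polynomial.X + 1)) ≠ 0 :=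
    leadingCoeff_ne_zero.mp (by rw [l2]; norm_num)
  constructor
  · rw [natDegree_mul (pow_ne_zero _ hA0) (pow_ne_zero _ hB0), natDegree_pow, natDegree_pow,
      h1, h2]
    omega
  · rw [leadingCoeff_mul, leadingCoeff_pow, leadingCoeff_pow, l1, l2, ← pow_add]
    congr 1
    omega

lemma legP_coeff (n : ℕ) :
    (legP n).coeff n = (∑ k ∈ Finset.range (n+1), ((n.choose (n-k)) : ℝ) * (n.choose k)) * (1/2)^n := by
  rw [legP, Polynomial.finset_sum_coeff, Finset.sum_mul]
  refine Finset.sum_congr rfl fun k hk => ?_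
  have hk' : k ≤ n := Nat.lt_succ_iff.mp (Finset.mem_range.mp hk)
  obtain ⟨hd, hl⟩ := AB_facts n k hk'
  rw [coeff_C_mul]
  congr 1
  rw [← hl, Polynomial.leadingCoeff, hd]

lemma legP_coeff_ne (n : ℕ) : (legP n).coeff n ≠ 0 := by
  rw [legP_coeff]
  have h1 : (0:ℝ) < ∑ k ∈ Finset.range (n+1), ((n.choose (n-k)) : ℝ) * (n.choose k) := by
    refine Finset.sum_pos' (fun k _ => by positivity) ⟨0, Finset.mem_range.mpr (Nat.succ_pos n), ?_⟩
    simp [Nat.choose_self, Nat.choose_zero_right]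
  positivity

lemma legP_natDegree (n : ℕ) : (legP n).natDegree = n := by
  refine natDegree_eq_of_le_of_coeff_ne_zero ?_ (legP_coeff_ne n)
  refine (natDegree_sum_le _ _).trans ?_
  rw [Finset.fold_max_le]
  refine ⟨Nat.zero_le n, fun k hk => ?_⟩
  have hk' : k ≤ n := Nat.lt_succ_iff.mp (Finset.mem_range.mp hk)
  refine (natDegree_mul_le).trans ?_
  simp only [natDegree_C, zero_add]
  rw [(AB_facts n k hk').1]

lemma legP_ne_zero (n : ℕ) : legP n ≠ 0 := fun h => legP_coeff_ne n (by rw [h]; simp)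

end PolyFacts

def ilegP (n : ℕ) : Polynomial ℝ :=
  ∑ m ∈ Finset.range n, Polynomial.C ((legP (n-1)).coeff m / (m+1)) *
    (Polynomial.X^(m+1) - Polynomial.C ((-1:ℝ)^(m+1)))

section IlegFacts
open Polynomial

lemma ilegP_eval (n : ℕ) (hn : 1 ≤ n) (x : ℝ) : (ilegP n).eval x = intLeg n x := by
  have hev : ∀ t : ℝ, legendre (n-1) t = ∑ m ∈ Finset.range n, (legP (n-1)).coeff m * t^m := by
    intro t
    rw [← legP_eval, Polynomial.eval_eq_sum_range, legP_natDegree,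
      (by omega : n - 1 + 1 = n)]
  have : intLeg n x = ∑ m ∈ Finset.range n,
      (legP (n-1)).coeff m * ((x^(m+1) - (-1:ℝ)^(m+1)) / (m+1)) := by
    rw [intLeg]
    rw [intervalIntegral.integral_congr (g := fun t => ∑ m ∈ Finset.range n,
      (legP (n-1)).coeff m * t^m) (fun t _ => hev t)]
    rw [intervalIntegral.integral_finset_sum (f := fun m t => (legP (n-1)).coeff m * t^m) (fun m _ =>
      ((continuous_const.mul (continuous_pow m)).intervalIntegrable _ _))]
    refine Finset.sum_congr rfl fun m _ => ?_
    rw [intervalIntegral.integral_const_mul, integral_pow]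
  rw [this, ilegP, eval_finset_sum]
  refine Finset.sum_congr rfl fun m _ => ?_
  simp only [eval_mul, eval_C, eval_sub, eval_pow, eval_X]
  ring

lemma ilegP_eval2 (n : ℕ) (x : ℝ) : (ilegP (n+2)).eval x = intLeg (n+2) x :=
  ilegP_eval (n+2) (by omega) x

lemma ilegP_coeff (n : ℕ) (hn : 1 ≤ n) : (ilegP n).coeff n = (legP (n-1)).coeff (n-1) / n := by
  rw [ilegP, Polynomial.finset_sum_coeff]
  rw [Finset.sum_eq_single (n-1)]
  · rw [coeff_C_mul, coeff_sub, coeff_X_pow, if_pos (by omega), Polynomial.coeff_C,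
      if_neg (by omega)]
    rw [Nat.cast_pred hn]
    have : (n:ℝ) ≠ 0 := by positivity
    field_simp
    rw [sub_add_cancel, sub_zero, mul_one, mul_div_assoc, div_self this, mul_one]
  · intro m hm hne
    rw [coeff_C_mul, coeff_sub, coeff_X_pow, if_neg (by omega), Polynomial.coeff_C,
      if_neg (by omega), sub_zero]
    exact mul_zero _
  · intro h
    exact absurd (Finset.mem_range.mpr (by omega)) h

lemma ilegP_coeff_ne (n : ℕ) (hn : 1 ≤ n) : (ilegP n).coeff n ≠ 0 := by
  rw [ilegP_coeff n hn]
  exact div_ne_zero (legP_coeff_ne _) (by positivity)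

lemma ilegP_natDegree (n : ℕ) (hn : 1 ≤ n) : (ilegP n).natDegree = n := by
  refine natDegree_eq_of_le_of_coeff_ne_zero ?_ (ilegP_coeff_ne n hn)
  refine (natDegree_sum_le _ _).trans ?_
  rw [Finset.fold_max_le]
  refine ⟨Nat.zero_le n, fun m hm => ?_⟩
  refine (natDegree_mul_le).trans ?_
  simp only [natDegree_C, zero_add]
  refine (natDegree_sub_le _ _).trans ?_
  simp only [natDegree_X_pow, natDegree_C]
  have := Finset.mem_range.mp hm
  omega

lemma ilegP_ne_zero (n : ℕ) (hn : 1 ≤ n) : ilegP n ≠ 0 :=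
  fun h => ilegP_coeff_ne n hn (by rw [h]; simp)

end IlegFacts

section KeyLemmas
open Polynomial

lemma keyPoly (P : ℕ → Polynomial ℝ)
    (hmono : ∀ m n, m < n → (P m).natDegree < (P n).natDegree)
    (h0 : ∀ n, P n ≠ 0) :
    ∀ (N : ℕ) (c : ℕ → ℝ), (∑ n ∈ Finset.range N, Polynomial.C (c n) * P n) = 0 →
      ∀ n < N, c n = 0 := by
  intro N
  induction N with
  | zero => intro c _ n hn; omega
  | succ N ih =>
    intro c hc
    have hN : c N = 0 := by
      have h1 : (∑ n ∈ Finset.range (N+1), Polynomial.C (c n) * P n).coeff (P N).natDegree = 0 := by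
        rw [hc]; simp
      rw [Polynomial.finset_sum_coeff, Finset.sum_range_succ] at h1
      rw [Finset.sum_eq_zero (fun n hn => ?_)] at h1
      · rw [zero_add, coeff_C_mul, coeff_natDegree] at h1
        rcases mul_eq_zero.mp h1 with h | h
        · exact h
        · exact absurd h (leadingCoeff_ne_zero.mpr (h0 N))
      · rw [coeff_C_mul, coeff_eq_zero_of_natDegree_lt (hmono n N (Finset.mem_range.mp hn)),
          mul_zero]
    intro n hn
    rcases Nat.lt_succ_iff_lt_or_eq.mp hn with h | h
    · refine ih c ?_ n h
      rw [Finset.sum_range_succ, hN] at hc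
      simpa using hc
    · rw [h]; exact hN

lemma key1 (P : ℕ → Polynomial ℝ)
    (hmono : ∀ m n, m < n → (P m).natDegree < (P n).natDegree)
    (h0 : ∀ n, P n ≠ 0) (N : ℕ) (c : ℕ → ℝ)
    (h : ∀ t ∈ Set.Icc (-1:ℝ) 1, ∑ n ∈ Finset.range N, c n * (P n).eval t = 0) :
    ∀ n < N, c n = 0 := by
  refine keyPoly P hmono h0 N c ?_
  refine Polynomial.eq_zero_of_infinite_isRoot _ ?_
  refine Set.Infinite.mono (s := Set.Icc (-1:ℝ) 1) ?_ ?_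
  · intro t ht
    simp only [Set.mem_setOf_eq, IsRoot, eval_finset_sum, eval_mul, eval_C]
    exact h t ht
  · exact Set.Icc_infinite (by norm_num : (-1:ℝ) < 1)

lemma key2 (Q R : ℕ → Polynomial ℝ)
    (hQm : ∀ m n, m < n → (Q m).natDegree < (Q n).natDegree) (hQ0 : ∀ n, Q n ≠ 0)
    (hRm : ∀ m n, m < n → (R m).natDegree < (R n).natDegree) (hR0 : ∀ n, R n ≠ 0)
    (N2 N3 : ℕ) (c : ℕ → ℕ → ℝ)
    (h : ∀ y ∈ Set.Icc (-1:ℝ) 1, ∀ z ∈ Set.Icc (-1:ℝ) 1,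
      ∑ a ∈ Finset.range N2, ∑ b ∈ Finset.range N3,
        c a b * (Q a).eval y * (R b).eval z = 0) :
    ∀ a < N2, ∀ b < N3, c a b = 0 := by
  intro a ha b hb
  have step1 : ∀ a' < N2, ∀ z ∈ Set.Icc (-1:ℝ) 1,
      ∑ b' ∈ Finset.range N3, c a' b' * (R b').eval z = 0 := by
    intro a' ha' z hz
    refine key1 Q hQm hQ0 N2 (fun a'' => ∑ b' ∈ Finset.range N3, c a'' b' * (R b').eval z)
      (fun y hy => ?_) a' ha'
    rw [← h y hy z hz]
    refine Finset.sum_congr rfl fun a'' _ => ?_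
    rw [Finset.sum_mul]
    refine Finset.sum_congr rfl fun b' _ => by ring
  exact key1 R hRm hR0 N3 (c a) (fun z hz => step1 a ha z hz) b hb

lemma key3 (P Q R : ℕ → Polynomial ℝ)
    (hPm : ∀ m n, m < n → (P m).natDegree < (P n).natDegree) (hP0 : ∀ n, P n ≠ 0)
    (hQm : ∀ m n, m < n → (Q m).natDegree < (Q n).natDegree) (hQ0 : ∀ n, Q n ≠ 0)
    (hRm : ∀ m n, m < n → (R m).natDegree < (R n).natDegree) (hR0 : ∀ n, R n ≠ 0)
    (N1 N2 N3 : ℕ) (c : ℕ → ℕ → ℕ → ℝ)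
    (h : ∀ x ∈ Set.Icc (-1:ℝ) 1, ∀ y ∈ Set.Icc (-1:ℝ) 1, ∀ z ∈ Set.Icc (-1:ℝ) 1,
      ∑ i ∈ Finset.range N1, ∑ a ∈ Finset.range N2, ∑ b ∈ Finset.range N3,
        c i a b * (P i).eval x * (Q a).eval y * (R b).eval z = 0) :
    ∀ i < N1, ∀ a < N2, ∀ b < N3, c i a b = 0 := by
  intro i hi a ha b hb
  have step1 : ∀ i' < N1, ∀ y ∈ Set.Icc (-1:ℝ) 1, ∀ z ∈ Set.Icc (-1:ℝ) 1,
      ∑ a' ∈ Finset.range N2, ∑ b' ∈ Finset.range N3,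
        c i' a' b' * (Q a').eval y * (R b').eval z = 0 := by
    intro i' hi' y hy z hz
    refine key1 P hPm hP0 N1 (fun i'' => ∑ a' ∈ Finset.range N2, ∑ b' ∈ Finset.range N3,
      c i'' a' b' * (Q a').eval y * (R b').eval z) (fun x hx => ?_) i' hi'
    rw [← h x hx y hy z hz]
    refine Finset.sum_congr rfl fun i'' _ => ?_
    rw [Finset.sum_mul]
    refine Finset.sum_congr rfl fun a' _ => ?_
    rw [Finset.sum_mul]
    refine Finset.sum_congr rfl fun b' _ => by ring
  exact key2 Q R hQm hQ0 hRm hR0 N2 N3 (c i) (step1 i hi) a ha b hb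

end KeyLemmas

-- HEX SECTION (after hexFam, before stmt3)
abbrev I3 (p : ℕ) := Fin p × Fin p × Fin p
abbrev I2 (p : ℕ) := Fin p × Fin p

def hexEquiv (p : ℕ) :
    (I3 p ⊕ I3 p ⊕ I2 p ⊕ I2 p ⊕ I2 p ⊕ I3 p ⊕ I2 p ⊕ I2 p ⊕ I2 p ⊕ Fin p ⊕ Fin p ⊕ Fin p)
      ≃ HexIdx p where
  toFun := Sum.elim (fun v => .h11 v.1 v.2.1 v.2.2) <| Sum.elim (fun v => .h12 v.1 v.2.1 v.2.2) <|
    Sum.elim (fun v => .h13 v.1 v.2) <| Sum.elim (fun v => .h14 v.1 v.2) <|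
    Sum.elim (fun v => .h15 v.1 v.2) <| Sum.elim (fun v => .h21 v.1 v.2.1 v.2.2) <|
    Sum.elim (fun v => .h22 v.1 v.2) <| Sum.elim (fun v => .h23 v.1 v.2) <|
    Sum.elim (fun v => .h24 v.1 v.2) <| Sum.elim (fun v => .h31 v) <|
    Sum.elim (fun v => .h32 v) (fun v => .h33 v)
  invFun := fun x => match x with
    | .h11 i j k => .inl ⟨i,j,k⟩
    | .h12 i j k => .inr (.inl ⟨i,j,k⟩)
    | .h13 j k => .inr (.inr (.inl ⟨j,k⟩))
    | .h14 i k => .inr (.inr (.inr (.inl ⟨i,k⟩)))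
    | .h15 i j => .inr (.inr (.inr (.inr (.inl ⟨i,j⟩))))
    | .h21 i j k => .inr (.inr (.inr (.inr (.inr (.inl ⟨i,j,k⟩)))))
    | .h22 j k => .inr (.inr (.inr (.inr (.inr (.inr (.inl ⟨j,k⟩))))))
    | .h23 i k => .inr (.inr (.inr (.inr (.inr (.inr (.inr (.inl ⟨i,k⟩)))))))
    | .h24 i j => .inr (.inr (.inr (.inr (.inr (.inr (.inr (.inr (.inl ⟨i,j⟩))))))))
    | .h31 i => .inr (.inr (.inr (.inr (.inr (.inr (.inr (.inr (.inr (.inl i)))))))))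
    | .h32 j => .inr (.inr (.inr (.inr (.inr (.inr (.inr (.inr (.inr (.inr (.inl j))))))))))
    | .h33 k => .inr (.inr (.inr (.inr (.inr (.inr (.inr (.inr (.inr (.inr (.inr k))))))))))
  left_inv := by rintro (⟨i,j,k⟩|⟨i,j,k⟩|⟨j,k⟩|⟨i,k⟩|⟨i,j⟩|⟨i,j,k⟩|⟨j,k⟩|⟨i,k⟩|⟨i,j⟩|i|j|k) <;> rfl
  right_inv := by rintro (_|_|_|_|_|_|_|_|_|_|_|_) <;> rfl

instance (p : ℕ) : Fintype (HexIdx p) := Fintype.ofEquiv _ (hexEquiv p)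

lemma hex_sum {p : ℕ} (F : HexIdx p → ℝ) :
    ∑ idx : HexIdx p, F idx =
      ((∑ v : I3 p, F (.h11 v.1 v.2.1 v.2.2)) + (∑ v : I3 p, F (.h12 v.1 v.2.1 v.2.2))
      + (∑ v : I2 p, F (.h13 v.1 v.2)) + (∑ v : I2 p, F (.h14 v.1 v.2))
      + (∑ v : I2 p, F (.h15 v.1 v.2)) + (∑ v : I3 p, F (.h21 v.1 v.2.1 v.2.2))
      + (∑ v : I2 p, F (.h22 v.1 v.2)) + (∑ v : I2 p, F (.h23 v.1 v.2))
      + (∑ v : I2 p, F (.h24 v.1 v.2)) + (∑ v : Fin p, F (.h31 v))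
      + (∑ v : Fin p, F (.h32 v)) + (∑ v : Fin p, F (.h33 v))) := by
  rw [← Equiv.sum_comp (hexEquiv p) F]
  simp only [Fintype.sum_sum_type, hexEquiv, Equiv.coe_fn_mk, Sum.elim_inl, Sum.elim_inr]
  ring

section Gdefs
variable {p : ℕ}

def G11 (g : HexIdx p → ℝ) (i j k : ℕ) : ℝ :=
  if h : i < p ∧ j < p ∧ k < p then g (.h11 ⟨i,h.1⟩ ⟨j,h.2.1⟩ ⟨k,h.2.2⟩) else 0
def G12 (g : HexIdx p → ℝ) (i j k : ℕ) : ℝ :=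
  if h : i < p ∧ j < p ∧ k < p then g (.h12 ⟨i,h.1⟩ ⟨j,h.2.1⟩ ⟨k,h.2.2⟩) else 0
def G21 (g : HexIdx p → ℝ) (i j k : ℕ) : ℝ :=
  if h : i < p ∧ j < p ∧ k < p then g (.h21 ⟨i,h.1⟩ ⟨j,h.2.1⟩ ⟨k,h.2.2⟩) else 0
def G13 (g : HexIdx p → ℝ) (j k : ℕ) : ℝ :=
  if h : j < p ∧ k < p then g (.h13 ⟨j,h.1⟩ ⟨k,h.2⟩) else 0
def G14 (g : HexIdx p → ℝ) (i k : ℕ) : ℝ :=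
  if h : i < p ∧ k < p then g (.h14 ⟨i,h.1⟩ ⟨k,h.2⟩) else 0
def G15 (g : HexIdx p → ℝ) (i j : ℕ) : ℝ :=
  if h : i < p ∧ j < p then g (.h15 ⟨i,h.1⟩ ⟨j,h.2⟩) else 0
def G22 (g : HexIdx p → ℝ) (j k : ℕ) : ℝ :=
  if h : j < p ∧ k < p then g (.h22 ⟨j,h.1⟩ ⟨k,h.2⟩) else 0
def G23 (g : HexIdx p → ℝ) (i k : ℕ) : ℝ :=
  if h : i < p ∧ k < p then g (.h23 ⟨i,h.1⟩ ⟨k,h.2⟩) else 0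
def G24 (g : HexIdx p → ℝ) (i j : ℕ) : ℝ :=
  if h : i < p ∧ j < p then g (.h24 ⟨i,h.1⟩ ⟨j,h.2⟩) else 0
def G31 (g : HexIdx p → ℝ) (i : ℕ) : ℝ := if h : i < p then g (.h31 ⟨i,h⟩) else 0
def G32 (g : HexIdx p → ℝ) (j : ℕ) : ℝ := if h : j < p then g (.h32 ⟨j,h⟩) else 0
def G33 (g : HexIdx p → ℝ) (k : ℕ) : ℝ := if h : k < p then g (.h33 ⟨k,h⟩) else 0

lemma G11_app (g : HexIdx p → ℝ) (i j k : Fin p) : g (.h11 i j k) = G11 g i j k := by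
  rw [G11, dif_pos ⟨i.isLt, j.isLt, k.isLt⟩]
lemma G12_app (g : HexIdx p → ℝ) (i j k : Fin p) : g (.h12 i j k) = G12 g i j k := by
  rw [G12, dif_pos ⟨i.isLt, j.isLt, k.isLt⟩]
lemma G21_app (g : HexIdx p → ℝ) (i j k : Fin p) : g (.h21 i j k) = G21 g i j k := by
  rw [G21, dif_pos ⟨i.isLt, j.isLt, k.isLt⟩]
lemma G13_app (g : HexIdx p → ℝ) (j k : Fin p) : g (.h13 j k) = G13 g j k := by
  rw [G13, dif_pos ⟨j.isLt, k.isLt⟩]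
lemma G14_app (g : HexIdx p → ℝ) (i k : Fin p) : g (.h14 i k) = G14 g i k := by
  rw [G14, dif_pos ⟨i.isLt, k.isLt⟩]
lemma G15_app (g : HexIdx p → ℝ) (i j : Fin p) : g (.h15 i j) = G15 g i j := by
  rw [G15, dif_pos ⟨i.isLt, j.isLt⟩]
lemma G22_app (g : HexIdx p → ℝ) (j k : Fin p) : g (.h22 j k) = G22 g j k := by
  rw [G22, dif_pos ⟨j.isLt, k.isLt⟩]
lemma G23_app (g : HexIdx p → ℝ) (i k : Fin p) : g (.h23 i k) = G23 g i k := by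
  rw [G23, dif_pos ⟨i.isLt, k.isLt⟩]
lemma G24_app (g : HexIdx p → ℝ) (i j : Fin p) : g (.h24 i j) = G24 g i j := by
  rw [G24, dif_pos ⟨i.isLt, j.isLt⟩]
lemma G31_app (g : HexIdx p → ℝ) (i : Fin p) : g (.h31 i) = G31 g i := by
  rw [G31, dif_pos i.isLt]
lemma G32_app (g : HexIdx p → ℝ) (j : Fin p) : g (.h32 j) = G32 g j := by
  rw [G32, dif_pos j.isLt]
lemma G33_app (g : HexIdx p → ℝ) (k : Fin p) : g (.h33 k) = G33 g k := by
  rw [G33, dif_pos k.isLt]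

def c0 (g : HexIdx p → ℝ) (i a b : ℕ) : ℝ :=
  if a = 0 then (if b = 0 then G31 g i else 2*G14 g i (b-1) + G23 g i (b-1))
  else (if b = 0 then 2*G15 g i (a-1) + G24 g i (a-1)
        else 4*G11 g i (a-1) (b-1) + G21 g i (a-1) (b-1))

def c1 (g : HexIdx p → ℝ) (a j b : ℕ) : ℝ :=
  if a = 0 then (if b = 0 then G32 g j else -2*G13 g j (b-1) + G22 g j (b-1))
  else (if b = 0 then -2*G15 g (a-1) j + G24 g (a-1) j
        else 4*G12 g (a-1) j (b-1) + G21 g (a-1) j (b-1))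

def c2 (g : HexIdx p → ℝ) (a b k : ℕ) : ℝ :=
  if a = 0 then (if b = 0 then G33 g k else 2*G13 g (b-1) k + G22 g (b-1) k)
  else (if b = 0 then -2*G14 g (a-1) k + G23 g (a-1) k
        else -4*G11 g (a-1) (b-1) k + -4*G12 g (a-1) (b-1) k)

end Gdefs

set_option maxHeartbeats 2000000 in
/-- for every `p ≥ 1` the collection of all interior functions for
the `H(div)`-conforming hexahedral element of order `p` is linearly independent
over `ℝ` as functions from `[0,1]³` to `ℝ³`. -/
theorem stmt3 : ∀ p : ℕ, 1 ≤ p → LinearIndependent ℝ (hexFam p) := by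
  intro p hp
  rw [Fintype.linearIndependent_iff]
  intro g hg
  have hpt : ∀ (q : Fin 3 → ℝ) (hq : q ∈ HCube) (m : Fin 3),
      ∑ idx : HexIdx p, g idx * hexFam p idx ⟨q, hq⟩ m = 0 := by
    intro q hq m
    have h1 := congrFun (congrFun hg ⟨q, hq⟩) m
    simpa [Finset.sum_apply, Pi.smul_apply, smul_eq_mul] using h1
  have hIm : ∀ m n : ℕ, m < n → (ilegP (m+2)).natDegree < (ilegP (n+2)).natDegree := by
    intro m n h
    rw [ilegP_natDegree _ (by omega), ilegP_natDegree _ (by omega)]; omega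
  have hI0 : ∀ n : ℕ, ilegP (n+2) ≠ 0 := fun n => ilegP_ne_zero _ (by omega)
  have hLm : ∀ m n : ℕ, m < n → (legP m).natDegree < (legP n).natDegree := by
    intro m n h; rw [legP_natDegree, legP_natDegree]; omega
  have T0 : ∀ x ∈ Set.Icc (-1:ℝ) 1, ∀ y ∈ Set.Icc (-1:ℝ) 1, ∀ z ∈ Set.Icc (-1:ℝ) 1,
      ∑ i ∈ Finset.range p, ∑ a ∈ Finset.range (p+1), ∑ b ∈ Finset.range (p+1),
        c0 g i a b * (ilegP (i+2)).eval x * (legP a).eval y * (legP b).eval z = 0 := by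
    intro x hx y hy z hz
    have hq : (![(x+1)/2, (y+1)/2, (z+1)/2]) ∈ HCube := by
      obtain ⟨hx1, hx2⟩ := hx; obtain ⟨hy1, hy2⟩ := hy; obtain ⟨hz1, hz2⟩ := hz
      refine ⟨⟨?_, ?_⟩, ⟨?_, ?_⟩, ⟨?_, ?_⟩⟩ <;> simp <;> linarith
    have S := hpt _ hq 0
    rw [hex_sum] at S
    simp only [hexFam, psiH11, psiH12, psiH13, psiH14, psiH15, psiH21, psiH22, psiH23, psiH24,
      psiH31, psiH32, psiH33, Matrix.cons_val_zero, Matrix.cons_val_one, Matrix.head_cons,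
      Matrix.cons_val_two, Matrix.tail_cons, mul_zero, Finset.sum_const_zero, add_zero, zero_add] at S
    have ex : 2*((x+1)/2)-1 = x := by ring
    have ey : 2*((y+1)/2)-1 = y := by ring
    have ez : 2*((z+1)/2)-1 = z := by ring
    rw [ex, ey, ez] at S
    simp only [← legP_eval, ← ilegP_eval2] at S
    simp only [G11_app g, G12_app g, G21_app g, G13_app g, G14_app g, G15_app g, G22_app g,
      G23_app g, G24_app g, G31_app g, G32_app g, G33_app g] at S
    simp only [Fintype.sum_prod_type] at S
    rw [← S]
    simp only [Finset.sum_range_succ']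
    simp only [c0, Nat.succ_ne_zero, if_false, if_true, eq_self_iff_true, Nat.add_sub_cancel]
    simp only [legP_zero_eval, mul_one]
    simp only [add_mul, Finset.sum_add_distrib]
    simp only [Finset.sum_range]
    simp only [neg_mul, mul_neg, mul_comm, mul_left_comm, mul_assoc]
    ring
  have T1 : ∀ x ∈ Set.Icc (-1:ℝ) 1, ∀ y ∈ Set.Icc (-1:ℝ) 1, ∀ z ∈ Set.Icc (-1:ℝ) 1,
      ∑ a ∈ Finset.range (p+1), ∑ j ∈ Finset.range p, ∑ b ∈ Finset.range (p+1),
        c1 g a j b * (legP a).eval x * (ilegP (j+2)).eval y * (legP b).eval z = 0 := by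
    intro x hx y hy z hz
    have hq : (![(x+1)/2, (y+1)/2, (z+1)/2]) ∈ HCube := by
      obtain ⟨hx1, hx2⟩ := hx; obtain ⟨hy1, hy2⟩ := hy; obtain ⟨hz1, hz2⟩ := hz
      refine ⟨⟨?_, ?_⟩, ⟨?_, ?_⟩, ⟨?_, ?_⟩⟩ <;> simp <;> linarith
    have S := hpt _ hq 1
    rw [hex_sum] at S
    simp only [hexFam, psiH11, psiH12, psiH13, psiH14, psiH15, psiH21, psiH22, psiH23, psiH24,
      psiH31, psiH32, psiH33, Matrix.cons_val_zero, Matrix.cons_val_one, Matrix.head_cons,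
      Matrix.cons_val_two, Matrix.tail_cons, mul_zero, Finset.sum_const_zero, add_zero, zero_add] at S
    have ex : 2*((x+1)/2)-1 = x := by ring
    have ey : 2*((y+1)/2)-1 = y := by ring
    have ez : 2*((z+1)/2)-1 = z := by ring
    rw [ex, ey, ez] at S
    simp only [← legP_eval, ← ilegP_eval2] at S
    simp only [G11_app g, G12_app g, G21_app g, G13_app g, G14_app g, G15_app g, G22_app g,
      G23_app g, G24_app g, G31_app g, G32_app g, G33_app g] at S
    simp only [Fintype.sum_prod_type] at S
    rw [← S]
    simp only [Finset.sum_range_succ']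
    simp only [c1, Nat.succ_ne_zero, if_false, if_true, eq_self_iff_true, Nat.add_sub_cancel]
    simp only [legP_zero_eval, mul_one]
    simp only [add_mul, Finset.sum_add_distrib]
    simp only [Finset.sum_range]
    simp only [neg_mul, mul_neg, mul_comm, mul_left_comm, mul_assoc]
    ring
  have T2 : ∀ x ∈ Set.Icc (-1:ℝ) 1, ∀ y ∈ Set.Icc (-1:ℝ) 1, ∀ z ∈ Set.Icc (-1:ℝ) 1,
      ∑ a ∈ Finset.range (p+1), ∑ b ∈ Finset.range (p+1), ∑ k ∈ Finset.range p,
        c2 g a b k * (legP a).eval x * (legP b).eval y * (ilegP (k+2)).eval z = 0 := by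
    intro x hx y hy z hz
    have hq : (![(x+1)/2, (y+1)/2, (z+1)/2]) ∈ HCube := by
      obtain ⟨hx1, hx2⟩ := hx; obtain ⟨hy1, hy2⟩ := hy; obtain ⟨hz1, hz2⟩ := hz
      refine ⟨⟨?_, ?_⟩, ⟨?_, ?_⟩, ⟨?_, ?_⟩⟩ <;> simp <;> linarith
    have S := hpt _ hq 2
    rw [hex_sum] at S
    simp only [hexFam, psiH11, psiH12, psiH13, psiH14, psiH15, psiH21, psiH22, psiH23, psiH24,
      psiH31, psiH32, psiH33, Matrix.cons_val_zero, Matrix.cons_val_one, Matrix.head_cons,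
      Matrix.cons_val_two, Matrix.tail_cons, mul_zero, Finset.sum_const_zero, add_zero, zero_add] at S
    have ex : 2*((x+1)/2)-1 = x := by ring
    have ey : 2*((y+1)/2)-1 = y := by ring
    have ez : 2*((z+1)/2)-1 = z := by ring
    rw [ex, ey, ez] at S
    simp only [← legP_eval, ← ilegP_eval2] at S
    simp only [G11_app g, G12_app g, G21_app g, G13_app g, G14_app g, G15_app g, G22_app g,
      G23_app g, G24_app g, G31_app g, G32_app g, G33_app g] at S
    simp only [Fintype.sum_prod_type] at S
    rw [← S]
    simp only [Finset.sum_range_succ']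
    simp only [c2, Nat.succ_ne_zero, if_false, if_true, eq_self_iff_true, Nat.add_sub_cancel]
    simp only [legP_zero_eval, mul_one]
    simp only [add_mul, Finset.sum_add_distrib]
    simp only [Finset.sum_range]
    simp only [neg_mul, mul_neg, mul_comm, mul_left_comm, mul_assoc]
    ring
  have K0 := key3 (fun n => ilegP (n+2)) legP legP hIm hI0 hLm legP_ne_zero hLm legP_ne_zero
    p (p+1) (p+1) (c0 g) T0
  have K1 := key3 legP (fun n => ilegP (n+2)) legP hLm legP_ne_zero hIm hI0 hLm legP_ne_zero
    (p+1) p (p+1) (c1 g) T1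
  have K2 := key3 legP legP (fun n => ilegP (n+2)) hLm legP_ne_zero hLm legP_ne_zero hIm hI0
    (p+1) (p+1) p (c2 g) T2
  intro idx
  cases idx with
  | h11 i j k =>
    have e1 := K0 ↑i i.isLt (↑j+1) (by omega) (↑k+1) (by omega)
    have e2 := K1 (↑i+1) (by omega) ↑j j.isLt (↑k+1) (by omega)
    have e3 := K2 (↑i+1) (by omega) (↑j+1) (by omega) ↑k k.isLt
    simp only [c0, c1, c2, Nat.succ_ne_zero, if_false, Nat.add_sub_cancel] at e1 e2 e3
    rw [G11_app g]; linarith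
  | h12 i j k =>
    have e1 := K0 ↑i i.isLt (↑j+1) (by omega) (↑k+1) (by omega)
    have e2 := K1 (↑i+1) (by omega) ↑j j.isLt (↑k+1) (by omega)
    have e3 := K2 (↑i+1) (by omega) (↑j+1) (by omega) ↑k k.isLt
    simp only [c0, c1, c2, Nat.succ_ne_zero, if_false, Nat.add_sub_cancel] at e1 e2 e3
    rw [G12_app g]; linarith
  | h21 i j k =>
    have e1 := K0 ↑i i.isLt (↑j+1) (by omega) (↑k+1) (by omega)
    have e2 := K1 (↑i+1) (by omega) ↑j j.isLt (↑k+1) (by omega)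
    have e3 := K2 (↑i+1) (by omega) (↑j+1) (by omega) ↑k k.isLt
    simp only [c0, c1, c2, Nat.succ_ne_zero, if_false, Nat.add_sub_cancel] at e1 e2 e3
    rw [G21_app g]; linarith
  | h13 j k =>
    have e1 := K1 0 (by omega) ↑j j.isLt (↑k+1) (by omega)
    have e2 := K2 0 (by omega) (↑j+1) (by omega) ↑k k.isLt
    simp only [c1, c2, Nat.succ_ne_zero, if_false, if_true, eq_self_iff_true,
      Nat.add_sub_cancel] at e1 e2
    rw [G13_app g]; linarith
  | h22 j k =>
    have e1 := K1 0 (by omega) ↑j j.isLt (↑k+1) (by omega)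
    have e2 := K2 0 (by omega) (↑j+1) (by omega) ↑k k.isLt
    simp only [c1, c2, Nat.succ_ne_zero, if_false, if_true, eq_self_iff_true,
      Nat.add_sub_cancel] at e1 e2
    rw [G22_app g]; linarith
  | h14 i k =>
    have e1 := K0 ↑i i.isLt 0 (by omega) (↑k+1) (by omega)
    have e2 := K2 (↑i+1) (by omega) 0 (by omega) ↑k k.isLt
    simp only [c0, c2, Nat.succ_ne_zero, if_false, if_true, eq_self_iff_true,
      Nat.add_sub_cancel] at e1 e2
    rw [G14_app g]; linarith
  | h23 i k =>
    have e1 := K0 ↑i i.isLt 0 (by omega) (↑k+1) (by omega)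
    have e2 := K2 (↑i+1) (by omega) 0 (by omega) ↑k k.isLt
    simp only [c0, c2, Nat.succ_ne_zero, if_false, if_true, eq_self_iff_true,
      Nat.add_sub_cancel] at e1 e2
    rw [G23_app g]; linarith
  | h15 i j =>
    have e1 := K0 ↑i i.isLt (↑j+1) (by omega) 0 (by omega)
    have e2 := K1 (↑i+1) (by omega) ↑j j.isLt 0 (by omega)
    simp only [c0, c1, Nat.succ_ne_zero, if_false, if_true, eq_self_iff_true,
      Nat.add_sub_cancel] at e1 e2
    rw [G15_app g]; linarith
  | h24 i j =>
    have e1 := K0 ↑i i.isLt (↑j+1) (by omega) 0 (by omega)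
    have e2 := K1 (↑i+1) (by omega) ↑j j.isLt 0 (by omega)
    simp only [c0, c1, Nat.succ_ne_zero, if_false, if_true, eq_self_iff_true,
      Nat.add_sub_cancel] at e1 e2
    rw [G24_app g]; linarith
  | h31 i =>
    have e1 := K0 ↑i i.isLt 0 (by omega) 0 (by omega)
    simp only [c0, if_true, eq_self_iff_true] at e1
    rw [G31_app g]; exact e1
  | h32 j =>
    have e1 := K1 0 (by omega) ↑j j.isLt 0 (by omega)
    simp only [c1, if_true, eq_self_iff_true] at e1
    rw [G32_app g]; exact e1
  | h33 k =>
    have e1 := K2 0 (by omega) 0 (by omega) ↑k k.isLt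
    simp only [c2, if_true, eq_self_iff_true] at e1
    rw [G33_app g]; exact e1
end
end

section
/- On the reference triangle K², for each edge e_k = [k1,k2] (0 ≤ k1 < k2 ≤ 2), the edge-based interior functions Φ^{t,i}_{e[k1,k2]} = C_i λ_{k1} λ_{k2} (1−λ_{k1})^i P_i^{(0,2)}(2λ_{k2}/(1−λ_{k1}) − 1) τ^{e_k}/|τ^{e_k}| with C_i = √(2(i+2)(i+3)(2i+3)(2i+5)) are orthonormal on K²: for all integers m, n ≥ 0, ⟨Φ^{t,m}_{e[k1,k2]}, Φ^{t,n}_{e[k1,k2]}⟩_{K²} = δ_{mn}. -/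
open MeasureTheory
open scoped BigOperators

noncomputable section

/-- Vertices of the reference triangle: `v0 = (0,0)`, `v1 = (1,0)`, `v2 = (0,1)`. -/
def vtx2 : Fin 3 → Fin 2 → ℝ := ![![0,0], ![1,0], ![0,1]]

/-- Barycentric coordinates `λ0 = 1−ξ−η`, `λ1 = ξ`, `λ2 = η`. -/
def lam2 : Fin 3 → (Fin 2 → ℝ) → ℝ :=
  ![fun p => 1 - p 0 - p 1, fun p => p 0, fun p => p 1]

/-- The (constant) gradients `∇λ_i`. -/
def gradLam2 : Fin 3 → Fin 2 → ℝ := ![![-1,-1], ![1,0], ![0,1]]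

/-- The reference triangle `K² = {(ξ,η) : ξ ≥ 0, η ≥ 0, ξ+η ≤ 1}`. -/
def K2 : Set (Fin 2 → ℝ) := {p | 0 ≤ p 0 ∧ 0 ≤ p 1 ∧ p 0 + p 1 ≤ 1}

/-- Euclidean dot product in ℝ². -/
def dot2 (u v : Fin 2 → ℝ) : ℝ := ∑ i, u i * v i

/-- Euclidean norm in ℝ². -/
def norm2 (u : Fin 2 → ℝ) : ℝ := Real.sqrt (∑ i, u i ^ 2)

/-- Normalization constant `C_i = √(2(i+2)(i+3)(2i+3)(2i+5))`. -/
def CEdgeTri (i : ℕ) : ℝ := Real.sqrt ((2*(i+2)*(i+3)*(2*i+3)*(2*i+5) : ℕ) : ℝ)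

/-- Edge-based interior function
`Φ^{t,i}_{e[k1,k2]} = C_i λ_{k1} λ_{k2} (1−λ_{k1})^i P_i^{(0,2)}(2λ_{k2}/(1−λ_{k1}) − 1) τ^{e_k}/|τ^{e_k}|`
(with the Jacobi factor in cleared-denominator form). -/
def PhiEdgeTri (k1 k2 : Fin 3) (i : ℕ) (p : Fin 2 → ℝ) : Fin 2 → ℝ :=
  (CEdgeTri i * lam2 k1 p * lam2 k2 p *
    jacobiHom i 0 2 (2 * lam2 k2 p - (1 - lam2 k1 p)) (1 - lam2 k1 p)) •
  ((norm2 (vtx2 k2 - vtx2 k1))⁻¹ • (vtx2 k2 - vtx2 k1))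


open Finset
open scoped fwdDiff


lemma fwdDiff_pow_expand (j : ℕ) :
    fwdDiff (1:ℝ) (fun x : ℝ => x ^ j) =
      ∑ i ∈ Finset.range j, (fun x : ℝ => (j.choose i : ℝ) * x ^ i) := by
  funext x
  simp only [fwdDiff, Finset.sum_apply]
  have h := add_pow x (1:ℝ) j
  simp only [one_pow, mul_one] at h
  rw [h, Finset.sum_range_succ]
  simp [Nat.choose_self, mul_comm]

lemma fwdDiff_iter_pow_lt : ∀ n j : ℕ, j < n →
    (fwdDiff (1:ℝ))^[n] (fun x : ℝ => x ^ j) = fun _ => 0 := by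
  intro n
  induction n with
  | zero => omega
  | succ n ih =>
    intro j hj
    rw [Function.iterate_succ_apply, fwdDiff_pow_expand]
    rw [fwdDiff_iter_finset_sum]
    funext x
    rw [Finset.sum_apply]
    apply Finset.sum_eq_zero
    intro i hi
    have : (fun x : ℝ => (j.choose i : ℝ) * x ^ i) = (j.choose i : ℝ) • (fun x : ℝ => x ^ i) := by
      funext y; simp [smul_eq_mul]
    rw [this, fwdDiff_iter_const_smul, ih i (by simp at hi; omega)]
    simp

lemma fwdDiff_iter_pow_self : ∀ n : ℕ, (fwdDiff (1:ℝ))^[n] (fun x : ℝ => x ^ n) = fun _ => (n.factorial : ℝ) := by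
  intro n
  induction n with
  | zero => funext x; simp
  | succ n ih =>
    rw [Function.iterate_succ_apply, fwdDiff_pow_expand, fwdDiff_iter_finset_sum]
    funext x
    rw [Finset.sum_apply, Finset.sum_range_succ]
    have h0 : ∀ i ∈ Finset.range n, ((fwdDiff (1:ℝ))^[n] (fun x : ℝ => ((n+1).choose i : ℝ) * x ^ i)) x = 0 := by
      intro i hi
      have : (fun x : ℝ => ((n+1).choose i : ℝ) * x ^ i) = ((n+1).choose i : ℝ) • (fun x : ℝ => x ^ i) := by
        funext y; simp [smul_eq_mul]
      rw [this, fwdDiff_iter_const_smul, fwdDiff_iter_pow_lt n i (Finset.mem_range.mp hi)]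
      simp
    rw [Finset.sum_eq_zero h0, zero_add]
    have : (fun x : ℝ => ((n+1).choose n : ℝ) * x ^ n) = ((n+1).choose n : ℝ) • (fun x : ℝ => x ^ n) := by
      funext y; simp [smul_eq_mul]
    rw [this, fwdDiff_iter_const_smul, ih]
    simp only [Pi.smul_apply, smul_eq_mul, Nat.choose_succ_self_right, Nat.factorial_succ]
    push_cast
    ring

lemma alt_sum_pow {j n : ℕ} (hj : j ≤ n) :
    ∑ l ∈ Finset.range (n+1), (-1:ℝ)^l * (n.choose l : ℝ) * (l:ℝ)^j =
      if j = n then (-1:ℝ)^n * (n.factorial : ℝ) else 0 := by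
  have key := fwdDiff_iter_eq_sum_shift (1:ℝ) (fun x : ℝ => x ^ j) n 0
  have hval : ((fwdDiff (1:ℝ))^[n] (fun x : ℝ => x ^ j)) 0 = if j = n then (n.factorial : ℝ) else 0 := by
    rcases eq_or_lt_of_le hj with rfl | h
    · rw [fwdDiff_iter_pow_self]; simp
    · rw [fwdDiff_iter_pow_lt n j h]; simp [Nat.ne_of_lt h]
  rw [hval] at key
  have key2 : ∑ k ∈ Finset.range (n+1), ((-1:ℝ))^(n-k) * (n.choose k : ℝ) * (k:ℝ)^j
      = if j = n then (n.factorial : ℝ) else 0 := by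
    rw [key]
    apply Finset.sum_congr rfl
    intro k _
    simp only [zsmul_eq_mul, nsmul_eq_mul, smul_eq_mul, zero_add, mul_one]
    push_cast
    ring
  have : ∑ l ∈ Finset.range (n+1), (-1:ℝ)^l * (n.choose l : ℝ) * (l:ℝ)^j
      = (-1:ℝ)^n * ∑ k ∈ Finset.range (n+1), ((-1:ℝ))^(n-k) * (n.choose k : ℝ) * (k:ℝ)^j := by
    rw [Finset.mul_sum]
    apply Finset.sum_congr rfl
    intro k hk
    have hk' : k ≤ n := by simp at hk; omega
    have h1 : ((-1:ℝ))^(n-k) * (-1:ℝ)^k = (-1:ℝ)^n := by rw [← pow_add]; congr 1; omega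
    have h2 : ((-1:ℝ))^n * (-1:ℝ)^n = 1 := by rw [← pow_add]; exact Even.neg_one_pow ⟨n, by ring⟩
    have hkk : ((-1:ℝ))^k * (-1:ℝ)^k = 1 := by rw [← pow_add]; exact Even.neg_one_pow ⟨k, by ring⟩
    have h3 : ((-1:ℝ))^(n-k) = (-1:ℝ)^n * (-1:ℝ)^k := by
      calc ((-1:ℝ))^(n-k) = (-1:ℝ)^(n-k) * ((-1:ℝ)^k * (-1:ℝ)^k) := by rw [hkk, mul_one]
      _ = ((-1:ℝ)^(n-k)*(-1:ℝ)^k) * (-1:ℝ)^k := by ring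
      _ = (-1:ℝ)^n * (-1:ℝ)^k := by rw [h1]
    rw [h3]
    linear_combination (-((n.choose k : ℝ) * (k:ℝ)^j * (-1:ℝ)^k)) * h2
  rw [this, key2]
  split
  · next h => simp
  · simp


lemma alt_sum_poly (n : ℕ) (p : Polynomial ℝ) (hp : p.natDegree < n + 1) :
    ∑ l ∈ Finset.range (n+1), (-1:ℝ)^l * (n.choose l : ℝ) * p.eval (l:ℝ) =
      (-1:ℝ)^n * (n.factorial : ℝ) * p.coeff n := by
  have heval : ∀ x : ℝ, p.eval x = ∑ i ∈ Finset.range (n+1), p.coeff i * x ^ i := fun x =>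
    Polynomial.eval_eq_sum_range' hp x
  calc ∑ l ∈ Finset.range (n+1), (-1:ℝ)^l * (n.choose l : ℝ) * p.eval (l:ℝ)
      = ∑ l ∈ Finset.range (n+1), ∑ i ∈ Finset.range (n+1),
          p.coeff i * ((-1:ℝ)^l * (n.choose l : ℝ) * (l:ℝ)^i) := by
        apply Finset.sum_congr rfl; intro l _
        rw [heval, Finset.mul_sum]
        apply Finset.sum_congr rfl; intro i _; ring
    _ = ∑ i ∈ Finset.range (n+1), p.coeff i *
          (∑ l ∈ Finset.range (n+1), (-1:ℝ)^l * (n.choose l : ℝ) * (l:ℝ)^i) := by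
        rw [Finset.sum_comm]
        apply Finset.sum_congr rfl; intro i _
        rw [Finset.mul_sum]
    _ = ∑ i ∈ Finset.range (n+1), p.coeff i * (if i = n then (-1:ℝ)^n * (n.factorial : ℝ) else 0) := by
        apply Finset.sum_congr rfl; intro i hi
        rw [alt_sum_pow (by simp at hi; omega)]
    _ = (-1:ℝ)^n * (n.factorial : ℝ) * p.coeff n := by
        simp_rw [mul_ite, mul_zero]
        rw [Finset.sum_ite_eq']
        rw [if_pos (Finset.mem_range.mpr (by omega))]
        ring

/-- the auxiliary polynomial -/
def qpoly (m n k : ℕ) : Polynomial ℝ :=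
  (∏ r ∈ Finset.range k, (Polynomial.X + Polynomial.C ((r:ℝ)+1))) *
  (∏ r ∈ Finset.range (m-k), (Polynomial.C ((n:ℝ)+2+((r:ℝ)+1)) - Polynomial.X))

lemma qpoly_eval (m n k : ℕ) (x : ℝ) :
    (qpoly m n k).eval x =
      (∏ r ∈ Finset.range k, (x + ((r:ℝ)+1))) *
      (∏ r ∈ Finset.range (m-k), (((n:ℝ)+2+((r:ℝ)+1)) - x)) := by
  simp [qpoly, Polynomial.eval_prod]

lemma CX_eq (a : ℝ) : Polynomial.C a - Polynomial.X = -(Polynomial.X - Polynomial.C a) := by ring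

lemma prod1_natDegree (k : ℕ) :
    (∏ r ∈ Finset.range k, (Polynomial.X + Polynomial.C ((r:ℝ)+1))).natDegree = k := by
  rw [Polynomial.natDegree_prod _ _ (fun r _ => Polynomial.X_add_C_ne_zero _)]
  trans (∑ _r ∈ Finset.range k, 1)
  · exact Finset.sum_congr rfl (fun r _ => Polynomial.natDegree_X_add_C _)
  · simp

lemma prod2_ne (a : ℝ) : Polynomial.C a - Polynomial.X ≠ 0 := by
  rw [CX_eq]; exact neg_ne_zero.mpr (Polynomial.X_sub_C_ne_zero a)

lemma prod2_natDegree (d : ℕ) (c : ℕ → ℝ) :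
    (∏ r ∈ Finset.range d, (Polynomial.C (c r) - Polynomial.X)).natDegree = d := by
  rw [Polynomial.natDegree_prod _ _ (fun r _ => prod2_ne (c r))]
  have e : ∀ r ∈ Finset.range d, (Polynomial.C (c r) - Polynomial.X).natDegree = 1 := by
    intro r _
    rw [CX_eq, Polynomial.natDegree_neg, Polynomial.natDegree_X_sub_C]
  trans (∑ _r ∈ Finset.range d, 1)
  · exact Finset.sum_congr rfl e
  · simp

lemma prod1_ne_zero (k : ℕ) :
    (∏ r ∈ Finset.range k, (Polynomial.X + Polynomial.C ((r:ℝ)+1))) ≠ 0 :=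
  Finset.prod_ne_zero_iff.mpr (fun r _ => Polynomial.X_add_C_ne_zero _)

lemma prod2_ne_zero (d : ℕ) (c : ℕ → ℝ) :
    (∏ r ∈ Finset.range d, (Polynomial.C (c r) - Polynomial.X)) ≠ 0 :=
  Finset.prod_ne_zero_iff.mpr (fun r _ => prod2_ne (c r))

lemma qpoly_natDegree (m n k : ℕ) (hk : k ≤ m) : (qpoly m n k).natDegree = m := by
  rw [qpoly, Polynomial.natDegree_mul (prod1_ne_zero k) (prod2_ne_zero _ _),
    prod1_natDegree, prod2_natDegree]
  omega

lemma qpoly_leadingCoeff (m n k : ℕ) :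
    (qpoly m n k).leadingCoeff = (-1:ℝ)^(m-k) := by
  rw [qpoly, Polynomial.leadingCoeff_mul, Polynomial.leadingCoeff_prod,
    Polynomial.leadingCoeff_prod]
  have e1 : ∀ r ∈ Finset.range k, (Polynomial.X + Polynomial.C ((r:ℝ)+1)).leadingCoeff = 1 :=
    fun r _ => Polynomial.leadingCoeff_X_add_C _
  have e2 : ∀ r ∈ Finset.range (m-k),
      (Polynomial.C ((n:ℝ)+2+((r:ℝ)+1)) - Polynomial.X).leadingCoeff = -1 := by
    intro r _
    rw [CX_eq, Polynomial.leadingCoeff_neg, Polynomial.leadingCoeff_X_sub_C]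
  trans ((∏ _r ∈ Finset.range k, (1:ℝ)) * (∏ _r ∈ Finset.range (m-k), (-1:ℝ)))
  · exact congrArg₂ (· * ·) (Finset.prod_congr rfl e1) (Finset.prod_congr rfl e2)
  · simp

lemma qpoly_coeff_n (m n k : ℕ) (hk : k ≤ m) (hmn : m ≤ n) :
    (qpoly m n k).coeff n = if m = n then (-1:ℝ)^(m-k) else 0 := by
  rcases eq_or_lt_of_le hmn with h | h
  · subst h
    have h1 : (qpoly m m k).coeff m = (qpoly m m k).leadingCoeff := by
      rw [Polynomial.leadingCoeff, qpoly_natDegree m m k hk]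
    rw [if_pos rfl, h1, qpoly_leadingCoeff]
  · rw [if_neg (by omega)]
    exact Polynomial.coeff_eq_zero_of_natDegree_lt (by rw [qpoly_natDegree m n k hk]; omega)


lemma fact_shift (k : ℕ) : ∀ l : ℕ,
    (k + l).factorial = l.factorial * ∏ r ∈ Finset.range k, (l + r + 1) := by
  induction k with
  | zero => intro l; simp
  | succ k ih =>
    intro l
    rw [Finset.prod_range_succ, show k+1+l = (k+l)+1 by omega, Nat.factorial_succ, ih l]
    ring

lemma nat_key {m n k l : ℕ} (hk : k ≤ m) (hl : l ≤ n) :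
    (n+2).choose l * (k+l).factorial * ((m-k)+(n-l)+2).factorial
      = (n+2).factorial * ((∏ r ∈ Finset.range k, (l+r+1)) *
          (∏ r ∈ Finset.range (m-k), ((n+2-l)+r+1))) := by
  have h1 : (m-k)+(n-l)+2 = (m-k) + (n+2-l) := by omega
  rw [h1, fact_shift (m-k) (n+2-l), fact_shift k l,
    ← Nat.choose_mul_factorial_mul_factorial (show l ≤ n+2 by omega)]
  ring

lemma real_key {m n k l : ℕ} (hk : k ≤ m) (hl : l ≤ n) :
    (((n+2).choose l : ℕ) : ℝ) * ((k+l).factorial : ℝ) * (((m-k)+(n-l)+2).factorial : ℝ)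
      = ((n+2).factorial : ℝ) * (qpoly m n k).eval (l:ℝ) := by
  have hcast : (((n+2).choose l * (k+l).factorial * ((m-k)+(n-l)+2).factorial : ℕ) : ℝ)
      = (((n+2).factorial * ((∏ r ∈ Finset.range k, (l+r+1)) *
          (∏ r ∈ Finset.range (m-k), ((n+2-l)+r+1))) : ℕ) : ℝ) := by
    exact congrArg (Nat.cast : ℕ → ℝ) (nat_key hk hl)
  push_cast at hcast
  rw [qpoly_eval]
  have e1 : (∏ r ∈ Finset.range k, ((l:ℝ) + (r:ℝ) + 1)) = ∏ r ∈ Finset.range k, ((l:ℝ) + ((r:ℝ)+1)) :=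
    Finset.prod_congr rfl (fun r _ => by ring)
  have e2 : (∏ r ∈ Finset.range (m-k), (((n:ℝ)+2-(l:ℝ)) + (r:ℝ) + 1))
      = ∏ r ∈ Finset.range (m-k), (((n:ℝ)+2+((r:ℝ)+1)) - (l:ℝ)) :=
    Finset.prod_congr rfl (fun r _ => by ring)
  rw [Nat.cast_sub (show l ≤ n+2 by omega)] at hcast
  push_cast at hcast
  rw [e1, e2] at hcast
  linarith [hcast]

lemma jacInnerSum {m n k : ℕ} (hk : k ≤ m) (hmn : m ≤ n) :
    ∑ l ∈ Finset.range (n+1),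
      (-1:ℝ)^l * (n.choose l : ℝ) * (((n+2).choose l : ℕ) : ℝ) * ((k+l).factorial : ℝ)
        * (((m-k)+(n-l)+2).factorial : ℝ)
      = (-1:ℝ)^n * (n.factorial : ℝ) * ((n+2).factorial : ℝ)
          * (if m = n then (-1:ℝ)^(m-k) else 0) := by
  have step : ∀ l ∈ Finset.range (n+1),
      (-1:ℝ)^l * (n.choose l : ℝ) * (((n+2).choose l : ℕ) : ℝ) * ((k+l).factorial : ℝ)
        * (((m-k)+(n-l)+2).factorial : ℝ)
      = ((n+2).factorial : ℝ) * ((-1:ℝ)^l * (n.choose l : ℝ) * (qpoly m n k).eval (l:ℝ)) := by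
    intro l hl
    have hl' : l ≤ n := by simp at hl; omega
    have := real_key (m := m) (n := n) hk hl'
    calc (-1:ℝ)^l * (n.choose l : ℝ) * (((n+2).choose l : ℕ) : ℝ) * ((k+l).factorial : ℝ)
        * (((m-k)+(n-l)+2).factorial : ℝ)
        = ((-1:ℝ)^l * (n.choose l : ℝ)) * ((((n+2).choose l : ℕ) : ℝ) * ((k+l).factorial : ℝ)
            * (((m-k)+(n-l)+2).factorial : ℝ)) := by ring
      _ = ((-1:ℝ)^l * (n.choose l : ℝ)) * (((n+2).factorial : ℝ) * (qpoly m n k).eval (l:ℝ)) := by rw [this]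
      _ = ((n+2).factorial : ℝ) * ((-1:ℝ)^l * (n.choose l : ℝ) * (qpoly m n k).eval (l:ℝ)) := by ring
  rw [Finset.sum_congr rfl step, ← Finset.mul_sum,
    alt_sum_poly n _ (by rw [qpoly_natDegree m n k hk]; omega),
    qpoly_coeff_n m n k hk hmn]
  ring

lemma vand (n : ℕ) :
    ∑ k ∈ Finset.range (n+1), (n.choose (n-k)) * ((n+2).choose k) = (2*n+2).choose n := by
  have h := Nat.add_choose_eq n (n+2) n
  rw [Finset.Nat.sum_antidiagonal_eq_sum_range_succ_mk] at h
  calc ∑ k ∈ Finset.range (n+1), (n.choose (n-k)) * ((n+2).choose k)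
      = ∑ k ∈ Finset.range (n+1), (n.choose (n+1-1-k)) * ((n+2).choose (n - (n - k))) := by
        apply Finset.sum_congr rfl
        intro k hk
        simp only [Finset.mem_range] at hk
        have e1 : n+1-1-k = n-k := by omega
        have e2 : n-(n-k) = k := by omega
        rw [e1, e2]
    _ = ∑ k ∈ Finset.range (n+1), (n.choose k) * ((n+2).choose (n-k)) := by
        exact Finset.sum_range_reflect (fun k => (n.choose k) * ((n+2).choose (n-k))) (n+1)
    _ = (2*n+2).choose n := by rw [← h]; congr 1; omega

lemma Ssum (m n : ℕ) :
    ∑ k ∈ Finset.range (m+1), ∑ l ∈ Finset.range (n+1),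
      ((-1:ℝ)^(k+l) * (m.choose (m-k) : ℝ) * ((m+2).choose k : ℝ) * (n.choose (n-l) : ℝ)
        * ((n+2).choose l : ℝ))
        * ((((m-k)+(n-l)+2).factorial : ℝ) * ((k+l).factorial : ℝ))
      = if m = n then (((n+2).factorial * n.factorial * ((2*n+2).choose n) : ℕ) : ℝ) else 0 := by
  -- first the case m ≤ n
  have main : ∀ m n : ℕ, m ≤ n →
      ∑ k ∈ Finset.range (m+1), ∑ l ∈ Finset.range (n+1),
        ((-1:ℝ)^(k+l) * (m.choose (m-k) : ℝ) * ((m+2).choose k : ℝ) * (n.choose (n-l) : ℝ)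
          * ((n+2).choose l : ℝ))
          * ((((m-k)+(n-l)+2).factorial : ℝ) * ((k+l).factorial : ℝ))
        = if m = n then (((n+2).factorial * n.factorial * ((2*n+2).choose n) : ℕ) : ℝ) else 0 := by
    clear m n
    intro m n hmn
    have hin : ∀ k ∈ Finset.range (m+1),
        ∑ l ∈ Finset.range (n+1),
          ((-1:ℝ)^(k+l) * (m.choose (m-k) : ℝ) * ((m+2).choose k : ℝ) * (n.choose (n-l) : ℝ)
            * ((n+2).choose l : ℝ))
            * ((((m-k)+(n-l)+2).factorial : ℝ) * ((k+l).factorial : ℝ))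
        = ((-1:ℝ)^k * (m.choose (m-k) : ℝ) * ((m+2).choose k : ℝ))
            * ((-1:ℝ)^n * (n.factorial : ℝ) * ((n+2).factorial : ℝ)
              * (if m = n then (-1:ℝ)^(m-k) else 0)) := by
      intro k hk
      have hk' : k ≤ m := by simp at hk; omega
      rw [← jacInnerSum hk' hmn, Finset.mul_sum]
      apply Finset.sum_congr rfl
      intro l hl
      have hl' : l ≤ n := by simp at hl; omega
      rw [Nat.choose_symm hl', pow_add]
      ring
    rw [Finset.sum_congr rfl hin]
    by_cases h : m = n
    · subst h
      rw [if_pos rfl]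
      have term : ∀ k ∈ Finset.range (m+1),
          ((-1:ℝ)^k * (m.choose (m-k) : ℝ) * ((m+2).choose k : ℝ))
            * ((-1:ℝ)^m * (m.factorial : ℝ) * ((m+2).factorial : ℝ) * (if m = m then (-1:ℝ)^(m-k) else 0))
          = ((m.choose (m-k) * ((m+2).choose k) : ℕ) : ℝ) * ((m.factorial : ℝ) * ((m+2).factorial : ℝ)) := by
        intro k hk
        have hk' : k ≤ m := by simp at hk; omega
        rw [if_pos rfl]
        have h1 : ((-1:ℝ))^(m-k) * (-1:ℝ)^k = (-1:ℝ)^m := by rw [← pow_add]; congr 1; omega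
        have h2 : ((-1:ℝ))^m * (-1:ℝ)^m = 1 := by rw [← pow_add]; exact Even.neg_one_pow ⟨m, by ring⟩
        push_cast
        linear_combination ((m.choose (m-k) : ℝ) * ((m+2).choose k : ℝ) * (m.factorial : ℝ)
          * ((m+2).factorial : ℝ)) * (by
            calc ((-1:ℝ))^k * ((-1:ℝ)^m * (-1:ℝ)^(m-k))
                = (-1:ℝ)^m * ((-1:ℝ)^(m-k) * (-1:ℝ)^k) := by ring
              _ = (-1:ℝ)^m * (-1:ℝ)^m := by rw [h1]
              _ = 1 := h2 :
            ((-1:ℝ))^k * ((-1:ℝ)^m * (-1:ℝ)^(m-k)) = 1)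
      rw [Finset.sum_congr rfl term, ← Finset.sum_mul, ← Nat.cast_sum, vand m]
      push_cast
      ring
    · rw [if_neg h]
      apply Finset.sum_eq_zero
      intro k _
      rw [if_neg h]
      ring
  rcases le_total m n with h | h
  · exact main m n h
  · rw [Finset.sum_comm]
    have swap : ∀ l ∈ Finset.range (n+1), ∀ k ∈ Finset.range (m+1),
        ((-1:ℝ)^(k+l) * (m.choose (m-k) : ℝ) * ((m+2).choose k : ℝ) * (n.choose (n-l) : ℝ)
          * ((n+2).choose l : ℝ))
          * ((((m-k)+(n-l)+2).factorial : ℝ) * ((k+l).factorial : ℝ))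
        = ((-1:ℝ)^(l+k) * (n.choose (n-l) : ℝ) * ((n+2).choose l : ℝ) * (m.choose (m-k) : ℝ)
          * ((m+2).choose k : ℝ))
          * ((((n-l)+(m-k)+2).factorial : ℝ) * ((l+k).factorial : ℝ)) := by
      intro l _ k _
      rw [show (m-k)+(n-l)+2 = (n-l)+(m-k)+2 by omega, add_comm k l]
      ring
    calc ∑ l ∈ Finset.range (n+1), ∑ k ∈ Finset.range (m+1),
          ((-1:ℝ)^(k+l) * (m.choose (m-k) : ℝ) * ((m+2).choose k : ℝ) * (n.choose (n-l) : ℝ)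
            * ((n+2).choose l : ℝ))
            * ((((m-k)+(n-l)+2).factorial : ℝ) * ((k+l).factorial : ℝ))
        = ∑ l ∈ Finset.range (n+1), ∑ k ∈ Finset.range (m+1),
          ((-1:ℝ)^(l+k) * (n.choose (n-l) : ℝ) * ((n+2).choose l : ℝ) * (m.choose (m-k) : ℝ)
            * ((m+2).choose k : ℝ))
            * ((((n-l)+(m-k)+2).factorial : ℝ) * ((l+k).factorial : ℝ)) := by
          apply Finset.sum_congr rfl
          intro l hl
          exact Finset.sum_congr rfl (swap l hl)
      _ = if n = m then (((m+2).factorial * m.factorial * ((2*m+2).choose m) : ℕ) : ℝ) else 0 :=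
          main n m h
      _ = if m = n then (((n+2).factorial * n.factorial * ((2*n+2).choose n) : ℕ) : ℝ) else 0 := by
          by_cases hmn : m = n
          · subst hmn; rfl
          · rw [if_neg hmn, if_neg (fun hc => hmn hc.symm)]



lemma beta_nat : ∀ c b : ℕ, (∫ t in (0:ℝ)..1, t^b * (1-t)^c)
    = (b.factorial : ℝ) * (c.factorial : ℝ) / ((b+c+1).factorial : ℝ) := by
  intro c
  induction c with
  | zero =>
    intro b
    simp only [pow_zero, mul_one]
    rw [integral_pow]
    rw [show b + 0 + 1 = b + 1 by omega, Nat.factorial_succ]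
    have : (b.factorial : ℝ) ≠ 0 := by positivity
    field_simp
    simp
  | succ c ih =>
    intro b
    have hu : ∀ x ∈ Set.uIcc (0:ℝ) 1, HasDerivAt (fun y : ℝ => (1-y)^(c+1))
        (-(((c:ℝ)+1) * (1-x)^c)) x := by
      intro x _
      have h1 : HasDerivAt (fun y : ℝ => 1 - y) (-1) x := by
        simpa using (hasDerivAt_id x).const_sub (1:ℝ)
      have h2 := h1.pow (c+1)
      simp only [Nat.add_sub_cancel] at h2
      refine h2.congr_deriv ?_
      push_cast
      ring
    have hv : ∀ x ∈ Set.uIcc (0:ℝ) 1, HasDerivAt (fun y : ℝ => y^(b+1)/((b:ℝ)+1))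
        (x^b) x := by
      intro x _
      have h1 := (hasDerivAt_pow (b+1) x).div_const ((b:ℝ)+1)
      simp only [Nat.add_sub_cancel] at h1
      have hb : ((b:ℝ)+1) ≠ 0 := by positivity
      refine h1.congr_deriv ?_
      push_cast
      field_simp
    have hu' : IntervalIntegrable (fun x : ℝ => -(((c:ℝ)+1) * (1-x)^c)) volume 0 1 := by
      apply Continuous.intervalIntegrable; continuity
    have hv' : IntervalIntegrable (fun x : ℝ => x^b) volume 0 1 := by
      apply Continuous.intervalIntegrable; continuity
    have key := intervalIntegral.integral_mul_deriv_eq_deriv_mul hu hv hu' hv'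
    have e1 : (∫ t in (0:ℝ)..1, t^b * (1-t)^(c+1))
        = ∫ x in (0:ℝ)..1, (1-x)^(c+1) * x^b := by
      apply intervalIntegral.integral_congr; intro x _; ring
    have e2 : (∫ x in (0:ℝ)..1, -(((c:ℝ)+1) * (1-x)^c) * (x^(b+1)/((b:ℝ)+1)))
        = (-((c:ℝ)+1)/((b:ℝ)+1)) * ∫ x in (0:ℝ)..1, x^(b+1) * (1-x)^c := by
      rw [← intervalIntegral.integral_const_mul]
      apply intervalIntegral.integral_congr; intro x _; ring
    rw [e1, key, e2, ih (b+1)]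
    have hb : ((b:ℝ)+1) ≠ 0 := by positivity
    have h4 : ((b+1+c+1).factorial : ℝ) ≠ 0 := by positivity
    rw [show b + (c+1) + 1 = b+1+c+1 by omega]
    rw [show (b+1).factorial = (b+1) * b.factorial from Nat.factorial_succ b,
      show (c+1).factorial = (c+1) * c.factorial from Nat.factorial_succ c]
    simp only [one_pow, zero_pow, mul_zero, zero_div, sub_zero, ne_eq, Nat.add_eq_zero]
    push_cast
    field_simp
    ring


def T2 : Set (ℝ × ℝ) := {z | 0 ≤ z.1 ∧ 0 ≤ z.2 ∧ z.1 + z.2 ≤ 1}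

lemma isClosed_T2 : IsClosed T2 := by
  have : T2 = {z : ℝ × ℝ | 0 ≤ z.1} ∩ ({z | 0 ≤ z.2} ∩ {z | z.1 + z.2 ≤ 1}) := by
    rfl
  rw [this]
  exact (isClosed_le continuous_const continuous_fst).inter
    ((isClosed_le continuous_const continuous_snd).inter
      (isClosed_le (continuous_fst.add continuous_snd) continuous_const))

lemma measurableSet_T2 : MeasurableSet T2 := isClosed_T2.measurableSet

lemma isCompact_T2 : IsCompact T2 := by
  apply (isCompact_Icc (a := ((0:ℝ),(0:ℝ))) (b := ((1:ℝ),(1:ℝ)))).of_isClosed_subset isClosed_T2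
  intro z hz
  obtain ⟨h1, h2, h3⟩ := hz
  constructor
  · exact ⟨h1, h2⟩
  · constructor
    · show z.1 ≤ (1:ℝ); linarith
    · show z.2 ≤ (1:ℝ); linarith

lemma Mlem (a b c : ℕ) :
    (∫ p in K2, (p 0)^a * (p 1)^b * (1 - p 0 - p 1)^c)
      = ((a.factorial : ℝ) * (b.factorial : ℝ) * (c.factorial : ℝ)) / ((a+b+c+2).factorial : ℝ) := by
  classical
  set F : ℝ × ℝ → ℝ := fun z => z.1^a * z.2^b * (1-z.1-z.2)^c with hF
  have hFcont : Continuous F := by fun_prop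
  -- step 1: transfer to ℝ × ℝ
  have hpre : K2 = (MeasurableEquiv.piFinTwo fun _ => ℝ) ⁻¹' T2 := rfl
  have h1 : (∫ p in K2, (p 0)^a * (p 1)^b * (1 - p 0 - p 1)^c) = ∫ z in T2, F z := by
    rw [hpre]
    exact (volume_preserving_piFinTwo fun _ => ℝ).setIntegral_preimage_emb
      (MeasurableEquiv.measurableEmbedding _) F T2
  rw [h1]
  -- integrability
  have hIF : IntegrableOn F T2 volume := hFcont.continuousOn.integrableOn_compact isCompact_T2
  have hInd : Integrable (T2.indicator F) volume := hIF.integrable_indicator measurableSet_T2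
  rw [← MeasureTheory.integral_indicator measurableSet_T2]
  rw [MeasureTheory.Measure.volume_eq_prod] at hInd ⊢
  rw [integral_prod _ hInd]
  -- inner integral
  set Kbc : ℝ := (b.factorial : ℝ) * (c.factorial : ℝ) / ((b+c+1).factorial : ℝ) with hKbc
  set h : ℝ → ℝ := fun x => x^a * (1-x)^(b+c+1) * Kbc with hh
  have hinner : ∀ x : ℝ, (∫ y, T2.indicator F (x, y)) = (Set.Icc (0:ℝ) 1).indicator h x := by
    intro x
    by_cases hx : x ∈ Set.Icc (0:ℝ) 1
    · obtain ⟨hx0, hx1⟩ := hx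
      have e1 : (fun y => T2.indicator F (x, y)) = (Set.Icc (0:ℝ) (1-x)).indicator (fun y => F (x, y)) := by
        funext y
        rw [Set.indicator_apply, Set.indicator_apply]
        have : ((x, y) ∈ T2) ↔ (y ∈ Set.Icc (0:ℝ) (1-x)) := by
          simp only [T2, Set.mem_setOf_eq, Set.mem_Icc]
          constructor
          · rintro ⟨_, h2, h3⟩; exact ⟨h2, by linarith⟩
          · rintro ⟨h2, h3⟩; exact ⟨hx0, h2, by linarith⟩
        simp [this]
      rw [e1, MeasureTheory.integral_indicator measurableSet_Icc]
      have hs0 : (0:ℝ) ≤ 1 - x := by linarith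
      rw [integral_Icc_eq_integral_Ioc, ← intervalIntegral.integral_of_le hs0]
      -- substitution y = t * s with s = 1 - x
      rcases eq_or_lt_of_le hs0 with hs | hs
      · -- 1 - x = 0
        rw [Set.indicator_of_mem (by exact ⟨hx0, hx1⟩), hh]
        simp only [← hs]
        rw [intervalIntegral.integral_same]
        simp [zero_pow (by omega : b + c + 1 ≠ 0), ← hs]
      · have hsne : (1 - x) ≠ 0 := ne_of_gt hs
        have subst := intervalIntegral.integral_comp_mul_right
          (f := fun y => F (x, y)) (a := 0) (b := 1) (c := 1-x) hsne
        simp only [zero_mul, one_mul] at subst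
        have : (∫ t in (0:ℝ)..1, F (x, t * (1-x)))
            = x^a * (1-x)^(b+c) * ∫ t in (0:ℝ)..1, t^b * (1-t)^c := by
          rw [← intervalIntegral.integral_const_mul]
          apply intervalIntegral.integral_congr
          intro t _
          simp only [hF]
          have : 1 - x - t * (1-x) = (1-x) * (1-t) := by ring
          rw [this, mul_pow, mul_pow]
          ring
        rw [this, beta_nat c b] at subst
        -- subst : x^a (1-x)^(b+c) * β = (1-x)⁻¹ • ∫ y in 0..(1-x), F (x,y)
        rw [Set.indicator_of_mem (by exact ⟨hx0, hx1⟩), hh, hKbc]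
        have := congrArg (fun r => (1-x) * r) subst
        simp only [smul_eq_mul, ← mul_assoc, mul_inv_cancel₀ hsne, one_mul] at this
        rw [← this]
        simp only [pow_succ']
        ring
    · have e0 : (fun y => T2.indicator F (x, y)) = fun _ => 0 := by
        funext y
        apply Set.indicator_of_notMem
        simp only [T2, Set.mem_setOf_eq, Set.mem_Icc] at hx ⊢
        intro ⟨h1', h2', h3'⟩
        exact hx ⟨h1', by linarith⟩
      rw [e0, MeasureTheory.integral_zero, Set.indicator_of_notMem hx]
  have : (fun x => ∫ y, T2.indicator F (x, y)) = (Set.Icc (0:ℝ) 1).indicator h := funext hinner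
  rw [this, MeasureTheory.integral_indicator measurableSet_Icc, integral_Icc_eq_integral_Ioc,
    ← intervalIntegral.integral_of_le (by norm_num : (0:ℝ) ≤ 1)]
  have : (∫ x in (0:ℝ)..1, h x) = (∫ x in (0:ℝ)..1, x^a * (1-x)^(b+c+1)) * Kbc := by
    rw [← intervalIntegral.integral_mul_const]
  rw [this, beta_nat (b+c+1) a, hKbc]
  have n1 : ((a+(b+c+1)+1).factorial : ℝ) ≠ 0 := by positivity
  have n2 : (((b+c+1)).factorial : ℝ) ≠ 0 := by positivity
  have n3 : (((a+b+c+2)).factorial : ℝ) ≠ 0 := by positivity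
  rw [show a+(b+c+1)+1 = a+b+c+2 by omega]
  field_simp

lemma isClosed_K2 : IsClosed K2 := by
  have : K2 = {p : Fin 2 → ℝ | 0 ≤ p 0} ∩ ({p | 0 ≤ p 1} ∩ {p | p 0 + p 1 ≤ 1}) := rfl
  rw [this]
  exact (isClosed_le continuous_const (continuous_apply 0)).inter
    ((isClosed_le continuous_const (continuous_apply 1)).inter
      (isClosed_le ((continuous_apply 0).add (continuous_apply 1)) continuous_const))

lemma isCompact_K2 : IsCompact K2 := by
  apply (isCompact_Icc (a := (fun _ => (0:ℝ))) (b := fun _ => (1:ℝ))).of_isClosed_subset isClosed_K2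
  intro p hp
  obtain ⟨h1, h2, h3⟩ := hp
  constructor
  · intro i
    fin_cases i
    · exact h1
    · exact h2
  · intro i
    fin_cases i
    · show p 0 ≤ (1:ℝ); linarith
    · show p 1 ≤ (1:ℝ); linarith

lemma measurableSet_K2 : MeasurableSet K2 := isClosed_K2.measurableSet

lemma integrableOn_K2 {f : (Fin 2 → ℝ) → ℝ} (hf : Continuous f) : IntegrableOn f K2 volume :=
  hf.continuousOn.integrableOn_compact isCompact_K2

lemma G_expand (m n : ℕ) (Cm Cn u v w : ℝ) (h : u + v + w = 1) :
    (Cm * u * v * jacobiHom m 0 2 (2*v - (1-u)) (1-u)) *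
    (Cn * u * v * jacobiHom n 0 2 (2*v - (1-u)) (1-u)) =
    ∑ k ∈ Finset.range (m+1), ∑ l ∈ Finset.range (n+1),
      (Cm * Cn * (((-1:ℝ)^(k+l) * (m.choose (m-k) : ℝ) * ((m+2).choose k : ℝ) * (n.choose (n-l) : ℝ)
        * ((n+2).choose l : ℝ))))
        * (u^2 * v^((m-k)+(n-l)+2) * w^(k+l)) := by
  have hjac : ∀ i : ℕ, jacobiHom i 0 2 (2*v - (1-u)) (1-u)
      = ∑ k ∈ Finset.range (i+1),
          ((i.choose (i-k) : ℝ) * (((i+2).choose k : ℕ) : ℝ)) * ((-1:ℝ)^k * w^k) * v^(i-k) := by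
    intro i
    unfold jacobiHom
    apply Finset.sum_congr rfl
    intro k _
    have e1 : (2*v - (1-u) - (1-u))/2 = -w := by
      rw [show (1:ℝ)-u = v + w by linarith]; ring
    have e2 : (2*v - (1-u) + (1-u))/2 = v := by ring
    rw [e1, e2, neg_pow]
    push_cast
    ring
  rw [hjac m, hjac n, Finset.mul_sum, Finset.mul_sum, Finset.sum_mul_sum]
  apply Finset.sum_congr rfl
  intro k hk
  apply Finset.sum_congr rfl
  intro l hl
  rw [pow_add ((-1:ℝ)) k l, pow_add w k l,
    show ((m-k)+(n-l)+2) = (m-k)+((n-l)+2) by omega, pow_add v, pow_add v (n-l) 2]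
  ring

lemma edge_core (m n : ℕ) (u v w : (Fin 2 → ℝ) → ℝ)
    (hsum : ∀ p, u p + v p + w p = 1)
    (hcontu : Continuous u) (hcontv : Continuous v) (hcontw : Continuous w)
    (hint : ∀ e g : ℕ, (∫ p in K2, (u p)^2 * (v p)^e * (w p)^g)
        = (2 * ((e.factorial : ℝ) * (g.factorial : ℝ))) / ((e+g+4).factorial : ℝ)) :
    (∫ p in K2, (CEdgeTri m * u p * v p * jacobiHom m 0 2 (2 * v p - (1 - u p)) (1 - u p)) *
        (CEdgeTri n * u p * v p * jacobiHom n 0 2 (2 * v p - (1 - u p)) (1 - u p)))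
      = if m = n then (1:ℝ) else 0 := by
  have hfun : ∀ p : Fin 2 → ℝ,
      (CEdgeTri m * u p * v p * jacobiHom m 0 2 (2 * v p - (1 - u p)) (1 - u p)) *
        (CEdgeTri n * u p * v p * jacobiHom n 0 2 (2 * v p - (1 - u p)) (1 - u p))
      = ∑ k ∈ Finset.range (m+1), ∑ l ∈ Finset.range (n+1),
          (CEdgeTri m * CEdgeTri n * (((-1:ℝ)^(k+l) * (m.choose (m-k) : ℝ) * ((m+2).choose k : ℝ)
            * (n.choose (n-l) : ℝ) * ((n+2).choose l : ℝ))))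
            * ((u p)^2 * (v p)^((m-k)+(n-l)+2) * (w p)^(k+l)) :=
    fun p => G_expand m n (CEdgeTri m) (CEdgeTri n) (u p) (v p) (w p) (hsum p)
  simp only [hfun]
  have hint1 : ∀ (r : ℝ) (e g : ℕ), IntegrableOn
      (fun p => r * ((u p)^2 * (v p)^e * (w p)^g)) K2 volume := by
    intro r e g
    apply integrableOn_K2
    fun_prop
  rw [MeasureTheory.integral_finset_sum _ (fun k _ => MeasureTheory.integrable_finset_sum _
    (fun l _ => hint1 _ _ _))]
  have step : ∀ k ∈ Finset.range (m+1),
      (∫ p in K2, ∑ l ∈ Finset.range (n+1),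
        (CEdgeTri m * CEdgeTri n * (((-1:ℝ)^(k+l) * (m.choose (m-k) : ℝ) * ((m+2).choose k : ℝ)
          * (n.choose (n-l) : ℝ) * ((n+2).choose l : ℝ))))
          * ((u p)^2 * (v p)^((m-k)+(n-l)+2) * (w p)^(k+l)))
      = ∑ l ∈ Finset.range (n+1),
          (CEdgeTri m * CEdgeTri n * 2 / (((m+n+6).factorial : ℝ)))
          * (((-1:ℝ)^(k+l) * (m.choose (m-k) : ℝ) * ((m+2).choose k : ℝ)
            * (n.choose (n-l) : ℝ) * ((n+2).choose l : ℝ))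
            * ((((m-k)+(n-l)+2).factorial : ℝ) * ((k+l).factorial : ℝ))) := by
    intro k hk
    rw [MeasureTheory.integral_finset_sum _ (fun l _ => hint1 _ _ _)]
    apply Finset.sum_congr rfl
    intro l hl
    have hk2 : k ≤ m := by simp at hk; omega
    have hl2 : l ≤ n := by simp at hl; omega
    rw [MeasureTheory.integral_const_mul, hint ((m-k)+(n-l)+2) (k+l)]
    rw [show (m-k)+(n-l)+2+(k+l)+4 = m+n+6 by omega]
    have hfac : (((m+n+6).factorial : ℝ)) ≠ 0 := by positivity
    field_simp
  rw [Finset.sum_congr rfl step]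
  simp_rw [← Finset.mul_sum]
  rw [Ssum m n]
  by_cases h : m = n
  · subst h
    rw [if_pos rfl, if_pos rfl]
    have hC : CEdgeTri m * CEdgeTri m = ((2*(m+2)*(m+3)*(2*m+3)*(2*m+5) : ℕ) : ℝ) := by
      rw [CEdgeTri]
      exact Real.mul_self_sqrt (by positivity)
    rw [show m+m+6 = 2*m+2+1+1+1+1 by omega, hC]
    have hnat : (2*(m+2)*(m+3)*(2*m+3)*(2*m+5)) * (2 * ((m+2).factorial * m.factorial * ((2*m+2).choose m))) = (2*m+2+1+1+1+1).factorial := by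
      have h1 := Nat.choose_mul_factorial_mul_factorial (show m ≤ 2*m+2 by omega)
      rw [show 2*m+2-m = m+2 by omega] at h1
      rw [Nat.factorial_succ (2*m+2+1+1+1), Nat.factorial_succ (2*m+2+1+1),
        Nat.factorial_succ (2*m+2+1), Nat.factorial_succ (2*m+2), ← h1]
      ring
    have hfac : (((2*m+2+1+1+1+1).factorial : ℝ)) ≠ 0 := by positivity
    rw [div_mul_eq_mul_div, div_eq_one_iff_eq hfac]
    have hcast := congrArg (Nat.cast : ℕ → ℝ) hnat
    push_cast at hcast ⊢
    linear_combination hcast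
  · rw [if_neg h, if_neg h, mul_zero]

/-- for each edge `e_k = [k1,k2]` of the reference triangle the
edge-based interior functions are orthonormal on `K²`. -/
theorem stmt4 : ∀ (k1 k2 : Fin 3), k1 < k2 → ∀ m n : ℕ,
    ∫ p in K2, dot2 (PhiEdgeTri k1 k2 m p) (PhiEdgeTri k1 k2 n p) =
      (if m = n then (1:ℝ) else 0) := by
  have hfact2 : ((Nat.factorial 2 : ℕ) : ℝ) = 2 := by norm_num [Nat.factorial]
  have key : ∀ (s t : ℝ) (xy : Fin 2 → ℝ),
      dot2 (s • (((norm2 xy)⁻¹) • xy)) (t • (((norm2 xy)⁻¹) • xy))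
        = s * t * ((norm2 xy)⁻¹ * (norm2 xy)⁻¹ * (xy 0 * xy 0 + xy 1 * xy 1)) := by
    intro s t xy
    rw [dot2, Fin.sum_univ_two]
    simp only [Pi.smul_apply, smul_eq_mul]
    ring
  intro k1 k2 hlt m n
  have hint01 : ∀ e g : ℕ, (∫ p in K2, (lam2 0 p)^2 * (lam2 1 p)^e * (lam2 2 p)^g)
      = (2 * ((e.factorial : ℝ) * (g.factorial : ℝ))) / ((e+g+4).factorial : ℝ) := by
    intro e g
    have h : ∀ p : Fin 2 → ℝ, (lam2 0 p)^2 * (lam2 1 p)^e * (lam2 2 p)^g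
        = (p 0)^e * (p 1)^g * (1 - p 0 - p 1)^2 := by
      intro p; show (1 - p 0 - p 1)^2 * (p 0)^e * (p 1)^g = _; ring
    simp only [h]
    rw [Mlem e g 2, show e+g+2+2 = e+g+4 by omega, hfact2]
    ring
  have hint02 : ∀ e g : ℕ, (∫ p in K2, (lam2 0 p)^2 * (lam2 2 p)^e * (lam2 1 p)^g)
      = (2 * ((e.factorial : ℝ) * (g.factorial : ℝ))) / ((e+g+4).factorial : ℝ) := by
    intro e g
    have h : ∀ p : Fin 2 → ℝ, (lam2 0 p)^2 * (lam2 2 p)^e * (lam2 1 p)^g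
        = (p 0)^g * (p 1)^e * (1 - p 0 - p 1)^2 := by
      intro p; show (1 - p 0 - p 1)^2 * (p 1)^e * (p 0)^g = _; ring
    simp only [h]
    rw [Mlem g e 2, show g+e+2+2 = e+g+4 by omega, hfact2]
    ring
  have hint12 : ∀ e g : ℕ, (∫ p in K2, (lam2 1 p)^2 * (lam2 2 p)^e * (lam2 0 p)^g)
      = (2 * ((e.factorial : ℝ) * (g.factorial : ℝ))) / ((e+g+4).factorial : ℝ) := by
    intro e g
    have h : ∀ p : Fin 2 → ℝ, (lam2 1 p)^2 * (lam2 2 p)^e * (lam2 0 p)^g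
        = (p 0)^2 * (p 1)^e * (1 - p 0 - p 1)^g := by
      intro p; show (p 0)^2 * (p 1)^e * (1 - p 0 - p 1)^g = _; ring
    simp only [h]
    rw [Mlem 2 e g, show 2+e+g+2 = e+g+4 by omega, hfact2]
    ring
  fin_cases k1 <;> fin_cases k2 <;> first
  | exact absurd hlt (by decide)
  | · -- case (0,1)
      show (∫ p in K2, dot2 (PhiEdgeTri 0 1 m p) (PhiEdgeTri 0 1 n p)) = if m = n then (1:ℝ) else 0
      have hv0 : (vtx2 1 - vtx2 0) 0 = 1 := by norm_num [vtx2]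
      have hv1 : (vtx2 1 - vtx2 0) 1 = 0 := by norm_num [vtx2]
      have hn : norm2 (vtx2 1 - vtx2 0) = 1 := by
        rw [norm2, Fin.sum_univ_two, hv0, hv1]; norm_num
      have hdot : ∀ p : Fin 2 → ℝ, dot2 (PhiEdgeTri 0 1 m p) (PhiEdgeTri 0 1 n p)
          = (CEdgeTri m * lam2 0 p * lam2 1 p *
              jacobiHom m 0 2 (2 * lam2 1 p - (1 - lam2 0 p)) (1 - lam2 0 p)) *
            (CEdgeTri n * lam2 0 p * lam2 1 p *
              jacobiHom n 0 2 (2 * lam2 1 p - (1 - lam2 0 p)) (1 - lam2 0 p)) := by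
        intro p
        rw [PhiEdgeTri, PhiEdgeTri, key, hv0, hv1, hn]
        norm_num
      simp only [hdot]
      exact edge_core m n (lam2 0) (lam2 1) (lam2 2)
        (fun p => by show (1 - p 0 - p 1) + p 0 + p 1 = 1; ring)
        (by show Continuous fun p : Fin 2 → ℝ => 1 - p 0 - p 1; fun_prop)
        (by show Continuous fun p : Fin 2 → ℝ => p 0; fun_prop)
        (by show Continuous fun p : Fin 2 → ℝ => p 1; fun_prop)
        hint01
  | · -- case (0,2)
      show (∫ p in K2, dot2 (PhiEdgeTri 0 2 m p) (PhiEdgeTri 0 2 n p)) = if m = n then (1:ℝ) else 0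
      have hv0 : (vtx2 2 - vtx2 0) 0 = 0 := by norm_num [vtx2]; rfl
      have hv1 : (vtx2 2 - vtx2 0) 1 = 1 := by norm_num [vtx2]; rfl
      have hn : norm2 (vtx2 2 - vtx2 0) = 1 := by
        rw [norm2, Fin.sum_univ_two, hv0, hv1]; norm_num
      have hdot : ∀ p : Fin 2 → ℝ, dot2 (PhiEdgeTri 0 2 m p) (PhiEdgeTri 0 2 n p)
          = (CEdgeTri m * lam2 0 p * lam2 2 p *
              jacobiHom m 0 2 (2 * lam2 2 p - (1 - lam2 0 p)) (1 - lam2 0 p)) *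
            (CEdgeTri n * lam2 0 p * lam2 2 p *
              jacobiHom n 0 2 (2 * lam2 2 p - (1 - lam2 0 p)) (1 - lam2 0 p)) := by
        intro p
        rw [PhiEdgeTri, PhiEdgeTri, key, hv0, hv1, hn]
        norm_num
      simp only [hdot]
      exact edge_core m n (lam2 0) (lam2 2) (lam2 1)
        (fun p => by show (1 - p 0 - p 1) + p 1 + p 0 = 1; ring)
        (by show Continuous fun p : Fin 2 → ℝ => 1 - p 0 - p 1; fun_prop)
        (by show Continuous fun p : Fin 2 → ℝ => p 1; fun_prop)
        (by show Continuous fun p : Fin 2 → ℝ => p 0; fun_prop)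
        hint02
  | · -- case (1,2)
      show (∫ p in K2, dot2 (PhiEdgeTri 1 2 m p) (PhiEdgeTri 1 2 n p)) = if m = n then (1:ℝ) else 0
      have hv0 : (vtx2 2 - vtx2 1) 0 = -1 := by norm_num [vtx2]; rfl
      have hv1 : (vtx2 2 - vtx2 1) 1 = 1 := by norm_num [vtx2]; rfl
      have hn : norm2 (vtx2 2 - vtx2 1) = Real.sqrt 2 := by
        rw [norm2, Fin.sum_univ_two, hv0, hv1]; norm_num
      have hs : (Real.sqrt 2)⁻¹ * (Real.sqrt 2)⁻¹ * ((-1:ℝ) * (-1) + 1 * 1) = 1 := by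
        rw [← mul_inv, Real.mul_self_sqrt (by norm_num)]
        norm_num
      have hdot : ∀ p : Fin 2 → ℝ, dot2 (PhiEdgeTri 1 2 m p) (PhiEdgeTri 1 2 n p)
          = (CEdgeTri m * lam2 1 p * lam2 2 p *
              jacobiHom m 0 2 (2 * lam2 2 p - (1 - lam2 1 p)) (1 - lam2 1 p)) *
            (CEdgeTri n * lam2 1 p * lam2 2 p *
              jacobiHom n 0 2 (2 * lam2 2 p - (1 - lam2 1 p)) (1 - lam2 1 p)) := by
        intro p
        rw [PhiEdgeTri, PhiEdgeTri, key, hv0, hv1, hn, hs, mul_one]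
      simp only [hdot]
      exact edge_core m n (lam2 1) (lam2 2) (lam2 0)
        (fun p => by show p 0 + p 1 + (1 - p 0 - p 1) = 1; ring)
        (by show Continuous fun p : Fin 2 → ℝ => p 0; fun_prop)
        (by show Continuous fun p : Fin 2 → ℝ => p 1; fun_prop)
        (by show Continuous fun p : Fin 2 → ℝ => 1 - p 0 - p 1; fun_prop)
        hint12
end
end

section
/- On the reference triangle K², for each edge e_k = [k1,k2] and each integer i ≥ 0, the edge-based interior function Φ^{t,i}_{e[k1,k2]} = C_i λ_{k1} λ_{k2} (1−λ_{k1})^i P_i^{(0,2)}(2λ_{k2}/(1−λ_{k1}) − 1) τ^{e_k}/|τ^{e_k}| (with C_i = √(2(i+2)(i+3)(2i+3)(2i+5))) satisfies: (i) its normal component vanishes at every point of each of the three edges of K², i.e. n^{e_j} · Φ^{t,i}_{e[k1,k2]} = 0 on e_j for every edge e_j; and (ii) its tangential component vanishes on the other two edges, i.e. τ^{e_j} · Φ^{t,i}_{e[k1,k2]} = 0 at every point of e_j whenever e_j ≠ e_k. -/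
open MeasureTheory
open scoped BigOperators

noncomputable section

/-- The unit outward normal of `K²` on the edge opposite the vertex `c`
(that edge lies on the line `λ_c = 0`): `n = −∇λ_c / |∇λ_c|`. -/
def nEdge2 (c : Fin 3) : Fin 2 → ℝ := (norm2 (gradLam2 c))⁻¹ • (-(gradLam2 c))


lemma seg_lam (c j1 j2 : Fin 3) (hc1 : c ≠ j1) (hc2 : c ≠ j2)
    (p : Fin 2 → ℝ) (hp : p ∈ segment ℝ (vtx2 j1) (vtx2 j2)) : lam2 c p = 0 := by
  obtain ⟨a, b, ha, hb, hab, rfl⟩ := hp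
  fin_cases c <;> fin_cases j1 <;> fin_cases j2 <;>
    simp_all [lam2, vtx2, Matrix.vecHead, Matrix.vecTail] <;> linarith

lemma normal_tangent (c k1 k2 : Fin 3) (h1 : c ≠ k1) (h2 : c ≠ k2) :
    dot2 (nEdge2 c) (vtx2 k2 - vtx2 k1) = 0 := by
  fin_cases c <;> fin_cases k1 <;> fin_cases k2 <;>
    simp_all [dot2, nEdge2, norm2, gradLam2, vtx2, Fin.sum_univ_two]

lemma pick (k1 k2 j1 j2 : Fin 3) (hk : k1 < k2) (hj : j1 < j2)
    (hne : (j1, j2) ≠ (k1, k2)) :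
    (k1 ≠ j1 ∧ k1 ≠ j2) ∨ (k2 ≠ j1 ∧ k2 ≠ j2) := by
  revert hk hj hne; revert k1 k2 j1 j2; decide

lemma dot2_phi (u : Fin 2 → ℝ) (k1 k2 : Fin 3) (i : ℕ) (p : Fin 2 → ℝ) :
    dot2 u (PhiEdgeTri k1 k2 i p) =
      (CEdgeTri i * lam2 k1 p * lam2 k2 p *
        jacobiHom i 0 2 (2 * lam2 k2 p - (1 - lam2 k1 p)) (1 - lam2 k1 p)) *
      ((norm2 (vtx2 k2 - vtx2 k1))⁻¹ * dot2 u (vtx2 k2 - vtx2 k1)) := by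
  simp [dot2, PhiEdgeTri, Fin.sum_univ_two, Pi.smul_apply, smul_eq_mul]; ring

/-- each edge-based interior function of the triangular element
(i) has vanishing normal component at every point of each of the three edges of
`K²`, and (ii) has vanishing tangential component at every point of each edge
other than its associated edge `e_k = [k1,k2]`. -/
theorem stmt6 : ∀ (k1 k2 : Fin 3), k1 < k2 → ∀ i : ℕ,
    (∀ (j1 j2 c : Fin 3), j1 < j2 → c ≠ j1 → c ≠ j2 →
      ∀ p ∈ segment ℝ (vtx2 j1) (vtx2 j2),
        dot2 (nEdge2 c) (PhiEdgeTri k1 k2 i p) = 0) ∧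
    (∀ (j1 j2 : Fin 3), j1 < j2 → (j1, j2) ≠ (k1, k2) →
      ∀ p ∈ segment ℝ (vtx2 j1) (vtx2 j2),
        dot2 (vtx2 j2 - vtx2 j1) (PhiEdgeTri k1 k2 i p) = 0) := by
  intro k1 k2 hk i
  constructor
  · intro j1 j2 c hj hc1 hc2 p hp
    rw [dot2_phi]
    by_cases h1 : k1 = c
    · subst h1
      rw [seg_lam k1 j1 j2 hc1 hc2 p hp]; ring
    by_cases h2 : k2 = c
    · subst h2
      rw [seg_lam k2 j1 j2 hc1 hc2 p hp]; ring
    · rw [normal_tangent c k1 k2 (Ne.symm h1) (Ne.symm h2)]; ring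
  · intro j1 j2 hj hne p hp
    rw [dot2_phi]
    rcases pick k1 k2 j1 j2 hk hj hne with ⟨h1, h2⟩ | ⟨h1, h2⟩
    · rw [seg_lam k1 j1 j2 h1 h2 p hp]; ring
    · rw [seg_lam k2 j1 j2 h1 h2 p hp]; ring
end
end
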